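/- arXiv:math/0309066 — 5 statements merged into one kernel-verified Lean document; each statement's English description precedes it below -/
import Mathlib

section
/- Any directed path in G_{s,k} from an out-vertex to an in-vertex has length exactly k(k+1)/2. -/
/-- A directed edge of the graph `G_{s,k}`: the tuple `w` is obtained from `v` by replacing
an adjacent pair `(v_p, v_{p+1})` with `v_p < v_{p+1}` by `(v_{p+1} - 1, v_p)`. -/
def CohStep (k : ℕ) (v w : Fin (k + 1) → ℕ) : Prop :=
  ∃ p : Fin k, v p.castSucc < v p.succ ∧
    w p.castSucc = v p.succ - 1 ∧ w p.succ = v p.castSucc ∧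
    ∀ q : Fin (k + 1), q ≠ p.castSucc → q ≠ p.succ → w q = v q

namespace Coh

variable {k : ℕ}

def IsIn (k : ℕ) (v : Fin (k+1) → ℕ) : Prop := ∀ p : Fin k, v p.succ ≤ v p.castSucc

def stepFun (k : ℕ) (v : Fin (k+1) → ℕ) (p : Fin k) : Fin (k+1) → ℕ :=
  fun j => if (j : ℕ) = (p : ℕ) then v p.succ - 1
    else if (j : ℕ) = (p : ℕ) + 1 then v p.castSucc else v j

lemma stepFun_isStep (v : Fin (k+1) → ℕ) (p : Fin k) (h : v p.castSucc < v p.succ) :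
    CohStep k v (stepFun k v p) := by
  refine ⟨p, h, ?_, ?_, ?_⟩
  · simp [stepFun]
  · simp [stepFun]
  · intro q h1 h2
    have n1 : (q:ℕ) ≠ (p:ℕ) := fun hq => h1 (Fin.ext (by simpa using hq))
    have n2 : (q:ℕ) ≠ (p:ℕ) + 1 := fun hq => h2 (Fin.ext (by simpa using hq))
    simp [stepFun, n1, n2]

lemma stepFun_at1 {k : ℕ} {v : Fin (k+1) → ℕ} {p : Fin k} {j : Fin (k+1)}
    (h : (j:ℕ) = (p:ℕ)) : stepFun k v p j = v p.succ - 1 := by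
  simp only [stepFun]; rw [if_pos h]

lemma stepFun_at2 {k : ℕ} {v : Fin (k+1) → ℕ} {p : Fin k} {j : Fin (k+1)}
    (h : (j:ℕ) = (p:ℕ) + 1) : stepFun k v p j = v p.castSucc := by
  simp only [stepFun]; rw [if_neg (by omega), if_pos h]

lemma stepFun_at3 {k : ℕ} {v : Fin (k+1) → ℕ} {p : Fin k} {j : Fin (k+1)}
    (h1 : (j:ℕ) ≠ (p:ℕ)) (h2 : (j:ℕ) ≠ (p:ℕ) + 1) : stepFun k v p j = v j := by
  simp only [stepFun]; rw [if_neg h1, if_neg h2]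

lemma step_eq {v w : Fin (k+1) → ℕ} {p : Fin k}
    (h1 : w p.castSucc = v p.succ - 1) (h2 : w p.succ = v p.castSucc)
    (h3 : ∀ q, q ≠ p.castSucc → q ≠ p.succ → w q = v q) : w = stepFun k v p := by
  funext j
  rcases eq_or_ne (j:ℕ) (p:ℕ) with hj | hj
  · have hj' : j = p.castSucc := Fin.ext (by simpa using hj)
    rw [hj', h1]
    simp [stepFun]
  · rcases eq_or_ne (j:ℕ) ((p:ℕ)+1) with hj2 | hj2
    · have hj' : j = p.succ := Fin.ext (by simpa using hj2)
      rw [hj', h2]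
      simp [stepFun]
    · rw [h3 j (fun hq => hj (by simp [hq])) (fun hq => hj2 (by simp [hq]))]
      simp [stepFun, hj, hj2]

lemma step_sum {v w : Fin (k+1) → ℕ} (h : CohStep k v w) :
    (∑ j, w j) + 1 = ∑ j, v j := by
  obtain ⟨p, hlt, h1, h2, h3⟩ := h
  have hne : p.castSucc ≠ p.succ := ne_of_lt Fin.castSucc_lt_succ
  have key : ∀ u : Fin (k+1) → ℕ, ∑ j, u j
      = (∑ j ∈ (Finset.univ.erase p.castSucc).erase p.succ, u j) + u p.succ + u p.castSucc := by
    intro u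
    rw [Finset.sum_erase_add _ _ (Finset.mem_erase.mpr ⟨hne.symm, Finset.mem_univ _⟩),
        Finset.sum_erase_add _ _ (Finset.mem_univ _)]
  have hs : ∑ j ∈ (Finset.univ.erase p.castSucc).erase p.succ, w j
      = ∑ j ∈ (Finset.univ.erase p.castSucc).erase p.succ, v j := by
    refine Finset.sum_congr rfl ?_
    intro q hq
    rw [Finset.mem_erase] at hq
    obtain ⟨hq1, hq2⟩ := hq
    rw [Finset.mem_erase] at hq2
    exact h3 q hq2.1 hq1
  rw [key w, key v, hs, h1, h2]
  omega

inductive CPath (k : ℕ) : (Fin (k+1) → ℕ) → (Fin (k+1) → ℕ) → ℕ → Prop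
  | refl (v : Fin (k+1) → ℕ) : CPath k v v 0
  | cons {v w x : Fin (k+1) → ℕ} {n : ℕ} :
      CohStep k v w → CPath k w x n → CPath k v x (n+1)

lemma path_cast {a b : Fin (k+1) → ℕ} {n m : ℕ} (h : CPath k a b n) (e : n = m) :
    CPath k a b m := e ▸ h

lemma path_trans {a b c : Fin (k+1) → ℕ} {n m : ℕ}
    (h1 : CPath k a b n) (h2 : CPath k b c m) : CPath k a c (n + m) := by
  induction h1 with
  | refl v => simpa using h2
  | cons s p ih =>
    exact path_cast (CPath.cons s (ih h2)) (by omega)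

lemma path_snoc {a b c : Fin (k+1) → ℕ} {n : ℕ}
    (h1 : CPath k a b n) (h2 : CohStep k b c) : CPath k a c (n + 1) :=
  path_trans h1 (CPath.cons h2 (CPath.refl _))

lemma exists_reach (k : ℕ) : ∀ N (v : Fin (k+1) → ℕ), (∑ j, v j) ≤ N →
    ∃ r z, CPath k v z r ∧ IsIn k z := by
  intro N
  induction N with
  | zero =>
    intro v hv
    refine ⟨0, v, CPath.refl v, fun p => ?_⟩
    have h1 : v p.succ ≤ ∑ j, v j :=
      Finset.single_le_sum (fun i _ => Nat.zero_le _) (Finset.mem_univ _)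
    omega
  | succ N ih =>
    intro v hv
    by_cases h : IsIn k v
    · exact ⟨0, v, CPath.refl v, h⟩
    · simp only [IsIn, not_forall, not_le] at h
      obtain ⟨p, hp⟩ := h
      have hstep := stepFun_isStep v p hp
      have hsum := step_sum hstep
      obtain ⟨r, z, pz, hz⟩ := ih (stepFun k v p) (by omega)
      exact ⟨r + 1, z, CPath.cons hstep pz, hz⟩

lemma disj_join (v : Fin (k+1) → ℕ) (pa pb : Fin k)
    (hd : (pa:ℕ) + 2 ≤ (pb:ℕ) ∨ (pb:ℕ) + 2 ≤ (pa:ℕ))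
    (ha : v pa.castSucc < v pa.succ) (hb : v pb.castSucc < v pb.succ) :
    ∃ y, CohStep k (stepFun k v pa) y ∧ CohStep k (stepFun k v pb) y := by
  have cpa : (pa.castSucc:ℕ) = (pa:ℕ) := Fin.coe_castSucc pa
  have spa : (pa.succ:ℕ) = (pa:ℕ) + 1 := Fin.val_succ pa
  have cpb : (pb.castSucc:ℕ) = (pb:ℕ) := Fin.coe_castSucc pb
  have spb : (pb.succ:ℕ) = (pb:ℕ) + 1 := Fin.val_succ pb
  have G1 : (stepFun k v pb) pa.castSucc = v pa.castSucc := stepFun_at3 (by omega) (by omega)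
  have G2 : (stepFun k v pb) pa.succ = v pa.succ := stepFun_at3 (by omega) (by omega)
  have G3 : (stepFun k v pa) pb.castSucc = v pb.castSucc := stepFun_at3 (by omega) (by omega)
  have G4 : (stepFun k v pa) pb.succ = v pb.succ := stepFun_at3 (by omega) (by omega)
  have s1 : CohStep k (stepFun k v pa) (stepFun k (stepFun k v pa) pb) :=
    stepFun_isStep _ pb (by rw [G3, G4]; exact hb)
  have s2 : CohStep k (stepFun k v pb) (stepFun k (stepFun k v pb) pa) :=
    stepFun_isStep _ pa (by rw [G1, G2]; exact ha)
  have e : stepFun k (stepFun k v pb) pa = stepFun k (stepFun k v pa) pb := by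
    funext j
    by_cases hj1 : (j:ℕ) = (pa:ℕ)
    · rw [stepFun_at1 (p := pa) (by omega), G2, stepFun_at3 (p := pb) (by omega) (by omega),
        stepFun_at1 (p := pa) (by omega)]
    · by_cases hj2 : (j:ℕ) = (pa:ℕ) + 1
      · rw [stepFun_at2 (p := pa) (by omega), G1, stepFun_at3 (p := pb) (by omega) (by omega),
          stepFun_at2 (p := pa) (by omega)]
      · by_cases hj3 : (j:ℕ) = (pb:ℕ)
        · rw [stepFun_at3 (p := pa) (by omega) (by omega), stepFun_at1 (p := pb) (by omega),
            stepFun_at1 (p := pb) (by omega), G4]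
        · by_cases hj4 : (j:ℕ) = (pb:ℕ) + 1
          · rw [stepFun_at3 (p := pa) (by omega) (by omega), stepFun_at2 (p := pb) (by omega),
              stepFun_at2 (p := pb) (by omega), G3]
          · rw [stepFun_at3 (p := pa) (by omega) (by omega),
              stepFun_at3 (p := pb) (by omega) (by omega),
              stepFun_at3 (p := pb) (by omega) (by omega),
              stepFun_at3 (p := pa) (by omega) (by omega)]
  rw [e] at s2
  exact ⟨_, s1, s2⟩

lemma adj_join (v : Fin (k+1) → ℕ) (pa pb : Fin k) (hadj : (pb:ℕ) = (pa:ℕ) + 1)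
    (ha : v pa.castSucc < v pa.succ) (hb : v pb.castSucc < v pb.succ) :
    ∃ y, CPath k (stepFun k v pa) y 2 ∧ CPath k (stepFun k v pb) y 2 := by
  have cpa : (pa.castSucc:ℕ) = (pa:ℕ) := Fin.coe_castSucc pa
  have spa : (pa.succ:ℕ) = (pa:ℕ) + 1 := Fin.val_succ pa
  have cpb : (pb.castSucc:ℕ) = (pb:ℕ) := Fin.coe_castSucc pb
  have spb : (pb.succ:ℕ) = (pb:ℕ) + 1 := Fin.val_succ pb
  have epoint : pb.castSucc = pa.succ := Fin.ext (by omega)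
  have ealias : v pb.castSucc = v pa.succ := congrArg v epoint
  have hb' : v pa.succ < v pb.succ := by rwa [ealias] at hb
  have B1 : (stepFun k v pa) pb.castSucc = v pa.castSucc := stepFun_at2 (by omega)
  have B2 : (stepFun k v pa) pb.succ = v pb.succ := stepFun_at3 (by omega) (by omega)
  have B3 : (stepFun k v pa) pa.castSucc = v pa.succ - 1 := stepFun_at1 (by omega)
  have s1 : CohStep k (stepFun k v pa) (stepFun k (stepFun k v pa) pb) :=
    stepFun_isStep _ pb (by rw [B1, B2]; omega)
  have C1 : (stepFun k (stepFun k v pa) pb) pa.castSucc = v pa.succ - 1 := by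
    rw [stepFun_at3 (p := pb) (by omega) (by omega), B3]
  have C2 : (stepFun k (stepFun k v pa) pb) pa.succ = v pb.succ - 1 := by
    rw [stepFun_at1 (p := pb) (by omega), B2]
  have s2 : CohStep k (stepFun k (stepFun k v pa) pb)
      (stepFun k (stepFun k (stepFun k v pa) pb) pa) :=
    stepFun_isStep _ pa (by rw [C1, C2]; omega)
  have E1 : (stepFun k v pb) pa.castSucc = v pa.castSucc := stepFun_at3 (by omega) (by omega)
  have E2 : (stepFun k v pb) pa.succ = v pb.succ - 1 := stepFun_at1 (by omega)
  have E3 : (stepFun k v pb) pb.succ = v pb.castSucc := stepFun_at2 (by omega)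
  have s3 : CohStep k (stepFun k v pb) (stepFun k (stepFun k v pb) pa) :=
    stepFun_isStep _ pa (by rw [E1, E2]; omega)
  have F1 : (stepFun k (stepFun k v pb) pa) pb.castSucc = v pa.castSucc := by
    rw [stepFun_at2 (p := pa) (by omega), E1]
  have F2 : (stepFun k (stepFun k v pb) pa) pb.succ = v pb.castSucc := by
    rw [stepFun_at3 (p := pa) (by omega) (by omega), E3]
  have s4 : CohStep k (stepFun k (stepFun k v pb) pa)
      (stepFun k (stepFun k (stepFun k v pb) pa) pb) :=
    stepFun_isStep _ pb (by rw [F1, F2]; omega)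
  have efinal : stepFun k (stepFun k (stepFun k v pb) pa) pb
      = stepFun k (stepFun k (stepFun k v pa) pb) pa := by
    funext j
    by_cases hj1 : (j:ℕ) = (pa:ℕ)
    · rw [stepFun_at3 (p := pb) (by omega) (by omega), stepFun_at1 (p := pa) (by omega), E2,
        stepFun_at1 (p := pa) (by omega), C2]
    · by_cases hj2 : (j:ℕ) = (pb:ℕ)
      · rw [stepFun_at1 (p := pb) (by omega), F2, stepFun_at2 (p := pa) (by omega), C1, ealias]
      · by_cases hj3 : (j:ℕ) = (pb:ℕ) + 1
        · rw [stepFun_at2 (p := pb) (by omega), F1, stepFun_at3 (p := pa) (by omega) (by omega),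
            stepFun_at2 (p := pb) (by omega), B1]
        · rw [stepFun_at3 (p := pb) (by omega) (by omega),
            stepFun_at3 (p := pa) (by omega) (by omega),
            stepFun_at3 (p := pb) (by omega) (by omega),
            stepFun_at3 (p := pa) (by omega) (by omega),
            stepFun_at3 (p := pb) (by omega) (by omega),
            stepFun_at3 (p := pa) (by omega) (by omega)]
  have path2 : CPath k (stepFun k v pb) (stepFun k (stepFun k (stepFun k v pb) pa) pb) 2 :=
    CPath.cons s3 (CPath.cons s4 (CPath.refl _))
  rw [efinal] at path2
  exact ⟨_, CPath.cons s1 (CPath.cons s2 (CPath.refl _)), path2⟩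

lemma uniq (k : ℕ) : ∀ N (v : Fin (k+1) → ℕ) m1 w1 m2 w2, (∑ j, v j) ≤ N →
    CPath k v w1 m1 → IsIn k w1 → CPath k v w2 m2 → IsIn k w2 → m1 = m2 := by
  intro N
  induction N with
  | zero =>
    intro v m1 w1 m2 w2 hsum p1 h1 p2 h2
    have hz : ∀ (j : Fin (k+1)), v j = 0 := fun j => by
      have := Finset.single_le_sum (f := v) (fun i _ => Nat.zero_le _) (Finset.mem_univ j)
      omega
    cases p1 with
    | refl =>
      cases p2 with
      | refl => rfl
      | cons hstep _ =>
        obtain ⟨p, hp, -, -, -⟩ := hstep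
        have e1 := hz p.castSucc
        have e2 := hz p.succ
        omega
    | cons hstep _ =>
      obtain ⟨p, hp, -, -, -⟩ := hstep
      have e1 := hz p.castSucc
      have e2 := hz p.succ
      omega
  | succ N ih =>
    intro v m1 w1 m2 w2 hsum p1 h1 p2 h2
    cases p1 with
    | refl =>
      cases p2 with
      | refl => rfl
      | cons hstep _ =>
        obtain ⟨p, hp, -, -, -⟩ := hstep
        exact absurd (h1 p) (by omega)
    | cons hstep1 q1 =>
      rename_i x1 n1
      cases p2 with
      | refl =>
        obtain ⟨p, hp, -, -, -⟩ := hstep1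
        exact absurd (h2 p) (by omega)
      | cons hstep2 q2 =>
        rename_i x2 n2
        obtain ⟨pa, ha, ha1, ha2, ha3⟩ := hstep1
        obtain ⟨pb, hb, hb1, hb2, hb3⟩ := hstep2
        have ex1 : x1 = stepFun k v pa := step_eq ha1 ha2 ha3
        have ex2 : x2 = stepFun k v pb := step_eq hb1 hb2 hb3
        subst ex1
        subst ex2
        have hsa := step_sum (stepFun_isStep v pa ha)
        have hsb := step_sum (stepFun_isStep v pb hb)
        by_cases hpp : pa = pb
        · subst hpp
          have := ih (stepFun k v pa) n1 w1 n2 w2 (by omega) q1 h1 q2 h2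
          omega
        · have hne : (pa:ℕ) ≠ (pb:ℕ) := fun h => hpp (Fin.ext h)
          rcases (by omega : (pb:ℕ) = (pa:ℕ) + 1 ∨ (pa:ℕ) = (pb:ℕ) + 1 ∨
              ((pa:ℕ)+2 ≤ (pb:ℕ) ∨ (pb:ℕ)+2 ≤ (pa:ℕ))) with hc | hc | hc
          · obtain ⟨y, py1, py2⟩ := adj_join v pa pb hc ha hb
            obtain ⟨r, z, pz, hzin⟩ := exists_reach k (∑ j, y j) y le_rfl
            have e1 := ih (stepFun k v pa) n1 w1 (2 + r) z (by omega) q1 h1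
              (path_trans py1 pz) hzin
            have e2 := ih (stepFun k v pb) n2 w2 (2 + r) z (by omega) q2 h2
              (path_trans py2 pz) hzin
            omega
          · obtain ⟨y, py1, py2⟩ := adj_join v pb pa hc hb ha
            obtain ⟨r, z, pz, hzin⟩ := exists_reach k (∑ j, y j) y le_rfl
            have e1 := ih (stepFun k v pa) n1 w1 (2 + r) z (by omega) q1 h1
              (path_trans py2 pz) hzin
            have e2 := ih (stepFun k v pb) n2 w2 (2 + r) z (by omega) q2 h2
              (path_trans py1 pz) hzin
            omega
          · obtain ⟨y, sy1, sy2⟩ := disj_join v pa pb hc ha hb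
            obtain ⟨r, z, pz, hzin⟩ := exists_reach k (∑ j, y j) y le_rfl
            have e1 := ih (stepFun k v pa) n1 w1 (r + 1) z (by omega) q1 h1
              (CPath.cons sy1 pz) hzin
            have e2 := ih (stepFun k v pb) n2 w2 (r + 1) z (by omega) q2 h2
              (CPath.cons sy2 pz) hzin
            omega

def tri : ℕ → ℕ
  | 0 => 0
  | n+1 => (n+1) + tri n

lemma tri_two : ∀ n, 2 * tri n = n * (n+1) := by
  intro n
  induction n with
  | zero => rfl
  | succ n ih =>
    calc 2 * tri (n+1) = 2*(n+1) + 2 * tri n := by rw [tri]; ring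
    _ = 2*(n+1) + n*(n+1) := by rw [ih]
    _ = (n+1)*((n+1)+1) := by ring

def idx (k i : ℕ) : Fin (k+1) := ⟨min i k, by omega⟩

lemma idx_val {k i : ℕ} (h : i ≤ k) : (idx k i : ℕ) = i := by
  simp [idx, min_eq_left h]

lemma idx_self {k : ℕ} (j : Fin (k+1)) : idx k (j:ℕ) = j := by
  apply Fin.ext
  have := j.isLt
  simp [idx]
  omega

def bub (k c : ℕ) (v : Fin (k+1) → ℕ) : Fin (k+1) → ℕ := fun j =>
  if (j:ℕ) < k - c then v j
  else if (j:ℕ) = k - c then v (idx k k) - c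
  else v (idx k ((j:ℕ) - 1))

lemma bub_lo {k c : ℕ} {v : Fin (k+1) → ℕ} {j : Fin (k+1)} (h : (j:ℕ) < k - c) :
    bub k c v j = v j := by
  simp only [bub]; rw [if_pos h]

lemma bub_mid {k c : ℕ} {v : Fin (k+1) → ℕ} {j : Fin (k+1)} (h : (j:ℕ) = k - c) :
    bub k c v j = v (idx k k) - c := by
  simp only [bub]; rw [if_neg (by omega), if_pos h]

lemma bub_hi {k c : ℕ} {v : Fin (k+1) → ℕ} {j : Fin (k+1)}
    (h1 : ¬ ((j:ℕ) < k - c)) (h2 : (j:ℕ) ≠ k - c) :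
    bub k c v j = v (idx k ((j:ℕ) - 1)) := by
  simp only [bub]; rw [if_neg h1, if_neg h2]

lemma bubble (k : ℕ) : ∀ c, c ≤ k → ∀ v : Fin (k+1) → ℕ,
    (∀ i, 1 ≤ i → i ≤ c → v (idx k (k - i)) + i ≤ v (idx k k)) →
    CPath k v (bub k c v) c := by
  intro c
  induction c with
  | zero =>
    intro _ v _
    have e0 : bub k 0 v = v := by
      funext j
      by_cases hj : (j:ℕ) < k
      · exact bub_lo (by omega)
      · have hjk : (j:ℕ) = k := by have := j.isLt; omega
        have e : idx k k = j := by
          apply Fin.ext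
          rw [idx_val le_rfl]
          omega
        rw [bub_mid (by omega), e]
        exact Nat.sub_zero _
    rw [e0]
    exact CPath.refl v
  | succ c ihc =>
    intro hck v hv
    have ih := ihc (by omega) v (fun i h1 h2 => hv i h1 (by omega))
    set p : Fin k := ⟨k - c - 1, by omega⟩ with hpdef
    have hpv : (p : ℕ) = k - c - 1 := rfl
    have hpc : (p.castSucc : ℕ) = k - c - 1 := by rw [Fin.coe_castSucc, hpv]
    have hpsv : (p.succ : ℕ) = k - c := by rw [Fin.val_succ, hpv]; omega
    have hlt : bub k c v p.castSucc < bub k c v p.succ := by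
      rw [bub_lo (by omega), bub_mid (by omega)]
      have e : p.castSucc = idx k (k - (c+1)) := by
        apply Fin.ext
        rw [hpc, idx_val (by omega)]
        omega
      rw [e]
      have := hv (c+1) (by omega) le_rfl
      omega
    have hstep := stepFun_isStep (bub k c v) p hlt
    have enext : stepFun k (bub k c v) p = bub k (c+1) v := by
      funext j
      have hjle : (j:ℕ) ≤ k := by have := j.isLt; omega
      rcases Nat.lt_trichotomy ((j:ℕ)) (k - c - 1) with hj | hj | hj
      · rw [stepFun_at3 (by omega) (by omega), bub_lo (by omega), bub_lo (by omega)]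
      · rw [stepFun_at1 (by omega), bub_mid (by omega), bub_mid (by omega)]
        omega
      · by_cases hj2 : (j:ℕ) = k - c
        · rw [stepFun_at2 (by omega), bub_lo (by omega), bub_hi (by omega) (by omega)]
          have e : p.castSucc = idx k ((j:ℕ) - 1) := by
            apply Fin.ext
            rw [hpc, idx_val (by omega)]
            omega
          rw [e]
        · rw [stepFun_at3 (by omega) (by omega), bub_hi (by omega) (by omega),
            bub_hi (by omega) (by omega)]
    rw [← enext]
    exact path_snoc ih hstep

def Fc (k c : ℕ) (v : Fin (k+1) → ℕ) : Fin (k+1) → ℕ := fun j =>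
  if (j:ℕ) < k - c then v j
  else v (idx k (k - ((j:ℕ) - (k - c)))) - (k - (j:ℕ))

lemma Fc_lo {k c : ℕ} {v : Fin (k+1) → ℕ} {j : Fin (k+1)} (h : (j:ℕ) < k - c) :
    Fc k c v j = v j := by
  simp only [Fc]; rw [if_pos h]

lemma Fc_hi {k c : ℕ} {v : Fin (k+1) → ℕ} {j : Fin (k+1)} (h : ¬ ((j:ℕ) < k - c)) :
    Fc k c v j = v (idx k (k - ((j:ℕ) - (k - c)))) - (k - (j:ℕ)) := by
  simp only [Fc]; rw [if_neg h]

lemma stages (k : ℕ) : ∀ c, c ≤ k → ∀ v : Fin (k+1) → ℕ,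
    (∀ i, k - c ≤ i → i < k → v (idx k i) < v (idx k (i+1))) →
    CPath k v (Fc k c v) (tri c) := by
  intro c
  induction c with
  | zero =>
    intro _ v _
    have e0 : Fc k 0 v = v := by
      funext j
      by_cases hj : (j:ℕ) < k
      · exact Fc_lo (by omega)
      · have hjk : (j:ℕ) = k := by have := j.isLt; omega
        rw [Fc_hi (by omega)]
        have e : idx k (k - ((j:ℕ) - (k - 0))) = j := by
          apply Fin.ext
          rw [idx_val (by omega)]
          omega
        rw [e, show k - (j:ℕ) = 0 from by omega, Nat.sub_zero]
    rw [e0]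
    exact CPath.refl v
  | succ c ihc =>
    intro hck v hmono
    have hgap : ∀ t i, k - (c+1) ≤ i → i + t ≤ k →
        v (idx k i) + t ≤ v (idx k (i + t)) := by
      intro t
      induction t with
      | zero => intro i _ _; simp
      | succ t iht =>
        intro i h1 h2
        have hstep := hmono (i + t) (by omega) (by omega)
        have hprev := iht i h1 (by omega)
        have e : i + (t+1) = (i + t) + 1 := by omega
        rw [e]
        omega
    have hbubhyp : ∀ i, 1 ≤ i → i ≤ c+1 → v (idx k (k - i)) + i ≤ v (idx k k) := by
      intro i h1 h2
      have := hgap i (k - i) (by omega) (by omega)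
      rwa [show k - i + i = k from by omega] at this
    have pb := bubble k (c+1) hck v hbubhyp
    set v' := bub k (c+1) v with hv'def
    have hmono' : ∀ i, k - c ≤ i → i < k → v' (idx k i) < v' (idx k (i+1)) := by
      intro i hi1 hi2
      have hi0 : 1 ≤ i := by omega
      have e1 : v' (idx k i) = v (idx k (i-1)) := by
        rw [hv'def, bub_hi (by rw [idx_val (by omega)]; omega) (by rw [idx_val (by omega)]; omega),
          idx_val (by omega)]
      have e2 : v' (idx k (i+1)) = v (idx k i) := by
        rw [hv'def, bub_hi (by rw [idx_val (by omega)]; omega) (by rw [idx_val (by omega)]; omega),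
          idx_val (by omega), Nat.add_sub_cancel]
      rw [e1, e2]
      have := hmono (i-1) (by omega) (by omega)
      rwa [show i - 1 + 1 = i from by omega] at this
    have ptail := ihc (by omega) v' hmono'
    have efc : Fc k c v' = Fc k (c+1) v := by
      funext j
      have hjle : (j:ℕ) ≤ k := by have := j.isLt; omega
      rcases Nat.lt_trichotomy ((j:ℕ)) (k - (c+1)) with hj | hj | hj
      · rw [Fc_lo (by omega), Fc_lo (by omega), hv'def, bub_lo (by omega)]
      · rw [Fc_lo (by omega), Fc_hi (by omega), hv'def, bub_mid (by omega)]
        rw [show k - ((j:ℕ) - (k - (c+1))) = k from by omega,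
          show k - (j:ℕ) = c + 1 from by omega]
      · rw [Fc_hi (by omega), Fc_hi (by omega)]
        rw [hv'def, bub_hi (by rw [idx_val (by omega)]; omega) (by rw [idx_val (by omega)]; omega),
          idx_val (by omega)]
        have eidx : k - ((j:ℕ) - (k - c)) - 1 = k - ((j:ℕ) - (k - (c+1))) := by omega
        rw [eidx]
    rw [efc] at ptail
    exact path_cast (path_trans pb ptail) (by rw [tri])

end Coh

open Coh in
/-- Any directed path in `G_{s,k}` from an out-vertex (strictly increasing tuple) to an
in-vertex (weakly decreasing tuple) has length exactly `k(k+1)/2`. -/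
theorem stmt3 (s k : ℕ) (hs : 1 ≤ s) (hk : 1 ≤ k) (m : ℕ)
    (f : ℕ → Fin (k + 1) → ℕ)
    (hbound : ∀ t ≤ m, ∀ j : Fin (k + 1), f t j ≤ s + (j : ℕ))
    (hstep : ∀ t < m, CohStep k (f t) (f (t + 1)))
    (hout : StrictMono (f 0))
    (hin : ∀ p : Fin k, f m p.succ ≤ f m p.castSucc) :
    2 * m = k * (k + 1) := by
  classical
  have hpath0 : ∀ n, n ≤ m → CPath k (f (m - n)) (f m) n := by
    intro n
    induction n with
    | zero => intro _; exact CPath.refl _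
    | succ n ihn =>
      intro hnm
      have h1 : m - (n+1) < m := by omega
      have hs' := hstep (m - (n+1)) h1
      rw [show m - (n+1) + 1 = m - n from by omega] at hs'
      exact CPath.cons hs' (ihn (by omega))
  have hpathm : CPath k (f 0) (f m) m := by
    have := hpath0 m le_rfl
    rwa [Nat.sub_self] at this
  have hmono : ∀ i, k - k ≤ i → i < k → f 0 (idx k i) < f 0 (idx k (i+1)) := by
    intro i _ hi
    apply hout
    rw [Fin.lt_iff_val_lt_val, idx_val (by omega), idx_val (by omega)]
    omega
  have hcan : CPath k (f 0) (Fc k k (f 0)) (tri k) := stages k k le_rfl (f 0) hmono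
  have hge : ∀ i, i ≤ k → i ≤ f 0 (idx k i) := by
    intro i
    induction i with
    | zero => intro _; exact Nat.zero_le _
    | succ i ihi =>
      intro h
      have h1 := hmono i (by omega) (by omega)
      have h2 := ihi (by omega)
      omega
  have hfin : IsIn k (Fc k k (f 0)) := by
    intro p
    have hpk : (p:ℕ) < k := p.isLt
    have hcs : (p.castSucc : ℕ) = (p:ℕ) := Fin.coe_castSucc p
    have hss : (p.succ : ℕ) = (p:ℕ) + 1 := Fin.val_succ p
    rw [Fc_hi (by omega), Fc_hi (by omega), hcs, hss]
    rw [show k - ((p:ℕ) + 1 - (k - k)) = k - ((p:ℕ)+1) from by omega,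
      show k - ((p:ℕ) - (k - k)) = k - (p:ℕ) from by omega]
    have h1 := hmono (k - ((p:ℕ)+1)) (by omega) (by omega)
    have h2 := hge (k - ((p:ℕ)+1)) (by omega)
    rw [show k - ((p:ℕ)+1) + 1 = k - (p:ℕ) from by omega] at h1
    omega
  have hm : m = tri k :=
    uniq k (∑ j, f 0 j) (f 0) m (f m) (tri k) (Fc k k (f 0)) le_rfl hpathm hin hcan hfin
  have h2 := tri_two k
  omega
end

section
/- Each connected component of the graph G_{s,k} contains exactly one out-vertex and exactly one in-vertex. -/
/-- The vertex set of `G_{s,k}`. -/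
def GskVertex (s k : ℕ) : Type :=
  {v : Fin (k + 1) → ℕ // ∀ j : Fin (k + 1), v j ≤ s + (j : ℕ)}

/-- The (undirected) graph `G_{s,k}`. -/
def Gsk (s k : ℕ) : SimpleGraph (GskVertex s k) :=
  SimpleGraph.fromRel (fun v w => CohStep k v.1 w.1)

namespace Stmt5Aux

open Relation

/-! ### Generic abstract rewriting lemmas -/

theorem newman {α : Type*} {r : α → α → Prop} (wf : WellFounded (fun a b => r b a))
    (lc : ∀ a b c, r a b → r a c → Join (ReflTransGen r) b c) :
    ∀ a b c, ReflTransGen r a b → ReflTransGen r a c → Join (ReflTransGen r) b c := by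
  intro a
  induction a using wf.induction with
  | _ a ih =>
    intro b c hab hac
    rcases hab.cases_head with rfl | ⟨b1, hb1, hb⟩
    · exact ⟨c, hac, ReflTransGen.refl⟩
    rcases hac.cases_head with rfl | ⟨c1, hc1, hc⟩
    · exact ⟨b, ReflTransGen.refl, ReflTransGen.head hb1 hb⟩
    obtain ⟨d, hbd, hcd⟩ := lc a b1 c1 hb1 hc1
    obtain ⟨e, hbe, hde⟩ := ih b1 hb1 b d hb hbd
    obtain ⟨f, hcf, hef⟩ := ih c1 hc1 c e hc (hcd.trans hde)
    exact ⟨f, hbe.trans hef, hcf⟩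

theorem eqvGen_join {α : Type*} {r : α → α → Prop}
    (conf : ∀ a b c, ReflTransGen r a b → ReflTransGen r a c → Join (ReflTransGen r) b c)
    {a b : α} (h : EqvGen r a b) : Join (ReflTransGen r) a b := by
  induction h with
  | rel a b h => exact ⟨b, ReflTransGen.single h, ReflTransGen.refl⟩
  | refl a => exact ⟨a, ReflTransGen.refl, ReflTransGen.refl⟩
  | symm a b _ ih => obtain ⟨d, h1, h2⟩ := ih; exact ⟨d, h2, h1⟩
  | trans a b c _ _ ih1 ih2 =>
      obtain ⟨d1, h1, h2⟩ := ih1; obtain ⟨d2, h3, h4⟩ := ih2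
      obtain ⟨e, he1, he2⟩ := conf b d1 d2 h2 h3
      exact ⟨e, h1.trans he1, h4.trans he2⟩

theorem exists_nf {α : Type*} {r : α → α → Prop} (wf : WellFounded (fun a b => r b a)) (a : α) :
    ∃ b, ReflTransGen r a b ∧ ∀ c, ¬ r b c := by
  induction a using wf.induction with
  | _ a ih =>
    by_cases h : ∃ c, r a c
    · obtain ⟨c, hc⟩ := h
      obtain ⟨b, h1, h2⟩ := ih c hc
      exact ⟨b, ReflTransGen.head hc h1, h2⟩
    · exact ⟨a, ReflTransGen.refl, fun c hc => h ⟨c, hc⟩⟩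

theorem nf_unique {α : Type*} {r : α → α → Prop}
    (conf : ∀ a b c, ReflTransGen r a b → ReflTransGen r a c → Join (ReflTransGen r) b c)
    {a b : α} (h : EqvGen r a b) (ha : ∀ c, ¬ r a c) (hb : ∀ c, ¬ r b c) : a = b := by
  obtain ⟨d, h1, h2⟩ := eqvGen_join conf h
  rcases h1.cases_head with rfl | ⟨c, hc, -⟩
  · rcases h2.cases_head with rfl | ⟨c, hc, -⟩
    · rfl
    · exact absurd hc (hb c)
  · exact absurd hc (ha c)

theorem eqvGen_swap {α : Type*} {r : α → α → Prop} {a b : α} (h : EqvGen r a b) :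
    EqvGen (fun x y => r y x) a b := by
  induction h with
  | rel a b h => exact EqvGen.symm _ _ (EqvGen.rel b a h)
  | refl a => exact EqvGen.refl a
  | symm a b _ ih => exact EqvGen.symm _ _ ih
  | trans a b c _ _ ih1 ih2 => exact EqvGen.trans _ _ _ ih1 ih2

theorem rtg_eqvGen {α : Type*} {r : α → α → Prop} {a b : α} (h : ReflTransGen r a b) :
    EqvGen r a b := by
  induction h with
  | refl => exact EqvGen.refl a
  | tail _ h2 ih => exact EqvGen.trans _ _ _ ih (EqvGen.rel _ _ h2)

/-! ### The step functions -/

variable {s k : ℕ}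

def stepFun (k : ℕ) (v : Fin (k + 1) → ℕ) (p : Fin k) : Fin (k + 1) → ℕ :=
  fun q => if q = p.castSucc then v p.succ - 1 else if q = p.succ then v p.castSucc else v q

def rstepFun (k : ℕ) (v : Fin (k + 1) → ℕ) (p : Fin k) : Fin (k + 1) → ℕ :=
  fun q => if q = p.castSucc then v p.succ else if q = p.succ then v p.castSucc + 1 else v q

lemma cs_ne (p : Fin k) : p.castSucc ≠ p.succ := ne_of_lt Fin.castSucc_lt_succ

lemma stepFun_cs (v : Fin (k+1) → ℕ) (p : Fin k) : stepFun k v p p.castSucc = v p.succ - 1 :=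
  if_pos rfl

lemma stepFun_s (v : Fin (k+1) → ℕ) (p : Fin k) : stepFun k v p p.succ = v p.castSucc := by
  rw [stepFun, if_neg (cs_ne p).symm, if_pos rfl]

lemma stepFun_other (v : Fin (k+1) → ℕ) (p : Fin k) {q : Fin (k+1)}
    (h1 : q ≠ p.castSucc) (h2 : q ≠ p.succ) : stepFun k v p q = v q := by
  rw [stepFun, if_neg h1, if_neg h2]

lemma rstepFun_cs (v : Fin (k+1) → ℕ) (p : Fin k) : rstepFun k v p p.castSucc = v p.succ :=
  if_pos rfl

lemma rstepFun_s (v : Fin (k+1) → ℕ) (p : Fin k) : rstepFun k v p p.succ = v p.castSucc + 1 := by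
  rw [rstepFun, if_neg (cs_ne p).symm, if_pos rfl]

lemma rstepFun_other (v : Fin (k+1) → ℕ) (p : Fin k) {q : Fin (k+1)}
    (h1 : q ≠ p.castSucc) (h2 : q ≠ p.succ) : rstepFun k v p q = v q := by
  rw [rstepFun, if_neg h1, if_neg h2]

lemma cohStep_iff {v w : Fin (k+1) → ℕ} :
    CohStep k v w ↔ ∃ p : Fin k, v p.castSucc < v p.succ ∧ w = stepFun k v p := by
  constructor
  · rintro ⟨p, h1, h2, h3, h4⟩
    refine ⟨p, h1, funext fun q => ?_⟩
    by_cases e1 : q = p.castSucc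
    · subst e1; rw [stepFun_cs]; exact h2
    by_cases e2 : q = p.succ
    · subst e2; rw [stepFun_s]; exact h3
    · rw [stepFun_other _ _ e1 e2]; exact h4 q e1 e2
  · rintro ⟨p, h1, rfl⟩
    exact ⟨p, h1, stepFun_cs v p, stepFun_s v p, fun q e1 e2 => stepFun_other _ _ e1 e2⟩

lemma cohStep_rev_iff {v w : Fin (k+1) → ℕ} :
    CohStep k w v ↔ ∃ p : Fin k, v p.succ ≤ v p.castSucc ∧ w = rstepFun k v p := by
  constructor
  · rintro ⟨p, h1, h2, h3, h4⟩
    refine ⟨p, by omega, funext fun q => ?_⟩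
    by_cases e1 : q = p.castSucc
    · subst e1; rw [rstepFun_cs]; omega
    by_cases e2 : q = p.succ
    · subst e2; rw [rstepFun_s]; omega
    · rw [rstepFun_other _ _ e1 e2]; exact (h4 q e1 e2).symm
  · rintro ⟨p, h1, rfl⟩
    refine ⟨p, ?_, ?_, ?_, fun q e1 e2 => (rstepFun_other _ _ e1 e2).symm⟩
    · rw [rstepFun_cs, rstepFun_s]; omega
    · rw [rstepFun_s]; omega
    · rw [rstepFun_cs]

def Bdd (s k : ℕ) (v : Fin (k+1) → ℕ) : Prop := ∀ j : Fin (k+1), v j ≤ s + (j : ℕ)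

lemma bdd_stepFun {v : Fin (k+1) → ℕ} (hv : Bdd s k v) (p : Fin k) :
    Bdd s k (stepFun k v p) := by
  intro q
  by_cases e1 : q = p.castSucc
  · subst e1
    rw [stepFun_cs]
    have := hv p.succ
    simp only [Fin.val_succ, Fin.coe_castSucc] at *
    omega
  by_cases e2 : q = p.succ
  · subst e2
    rw [stepFun_s]
    have := hv p.castSucc
    simp only [Fin.val_succ, Fin.coe_castSucc] at *
    omega
  · rw [stepFun_other _ _ e1 e2]; exact hv q

lemma bdd_rstepFun {v : Fin (k+1) → ℕ} (hv : Bdd s k v) (p : Fin k)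
    (hb : v p.succ ≤ s + (p : ℕ)) : Bdd s k (rstepFun k v p) := by
  intro q
  by_cases e1 : q = p.castSucc
  · subst e1
    rw [rstepFun_cs]
    simpa using hb
  by_cases e2 : q = p.succ
  · subst e2
    rw [rstepFun_s]
    have := hv p.castSucc
    simp only [Fin.val_succ, Fin.coe_castSucc] at *
    omega
  · rw [rstepFun_other _ _ e1 e2]; exact hv q

lemma bdd_of_step {v w : Fin (k+1) → ℕ} (hv : Bdd s k v) (h : CohStep k v w) : Bdd s k w := by
  obtain ⟨p, h1, rfl⟩ := cohStep_iff.mp h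
  exact bdd_stepFun hv p

/-! ### The measure -/

def M (k : ℕ) (v : Fin (k+1) → ℕ) : ℕ := ∑ j : Fin (k+1), (j : ℕ) * v j

lemma M_lt {v w : Fin (k+1) → ℕ} (h : CohStep k v w) : M k w < M k v := by
  classical
  obtain ⟨p, h1, rfl⟩ := cohStep_iff.mp h
  have hne : p.succ ≠ p.castSucc := (cs_ne p).symm
  have hmem : p.succ ∈ Finset.univ.erase p.castSucc :=
    Finset.mem_erase.mpr ⟨hne, Finset.mem_univ _⟩
  have hsplit : ∀ u : Fin (k+1) → ℕ,
      (∑ j : Fin (k+1), (j : ℕ) * u j) =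
      (∑ j ∈ (Finset.univ.erase p.castSucc).erase p.succ, (j : ℕ) * u j)
        + (p.succ : ℕ) * u p.succ + (p.castSucc : ℕ) * u p.castSucc := by
    intro u
    rw [Finset.sum_erase_add _ _ hmem, Finset.sum_erase_add _ _ (Finset.mem_univ _)]
  rw [M, M, hsplit, hsplit]
  have hcong : (∑ j ∈ (Finset.univ.erase p.castSucc).erase p.succ, (j : ℕ) * stepFun k v p j)
      = ∑ j ∈ (Finset.univ.erase p.castSucc).erase p.succ, (j : ℕ) * v j := by
    refine Finset.sum_congr rfl fun j hj => ?_
    simp only [Finset.mem_erase] at hj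
    rw [stepFun_other _ _ hj.2.1 hj.1]
  rw [hcong, stepFun_cs, stepFun_s]
  simp only [Fin.val_succ, Fin.coe_castSucc]
  have : ((p:ℕ) + 1) * v p.castSucc + (p:ℕ) * (v p.succ - 1)
      < ((p:ℕ) + 1) * v p.succ + (p:ℕ) * v p.castSucc := by
    obtain ⟨b', hb⟩ : ∃ b', v p.succ = b' + 1 := ⟨v p.succ - 1, by omega⟩
    rw [hb] at h1 ⊢
    simp only [Nat.add_sub_cancel]
    nlinarith [h1]
  rw [add_assoc, add_assoc]
  exact Nat.add_lt_add_left this _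

/-! ### Fin index helpers -/

lemma fne {a b : Fin (k+1)} (h : (a : ℕ) ≠ (b : ℕ)) : a ≠ b := fun e => h (congrArg Fin.val e)

lemma ne_cs_cs {p q : Fin k} (h : (p:ℕ) ≠ (q:ℕ)) :
    p.castSucc ≠ (q.castSucc : Fin (k+1)) := fne h

lemma ne_cs_s {p q : Fin k} (h : (p:ℕ) ≠ (q:ℕ) + 1) : p.castSucc ≠ q.succ := fne h

lemma ne_s_cs {p q : Fin k} (h : (p:ℕ) + 1 ≠ (q:ℕ)) : p.succ ≠ (q.castSucc : Fin (k+1)) := fne h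

lemma ne_s_s {p q : Fin k} (h : (p:ℕ) + 1 ≠ (q:ℕ) + 1) : p.succ ≠ q.succ := fne h

/-! ### Diamond computations -/

lemma fwd_disj_eq {v : Fin (k+1) → ℕ} {p q : Fin k} (h : (p:ℕ) + 1 < (q:ℕ)) :
    stepFun k (stepFun k v p) q = stepFun k (stepFun k v q) p := by
  have n1 : p.castSucc ≠ (q.castSucc : Fin (k+1)) := ne_cs_cs (by omega)
  have n2 : p.castSucc ≠ q.succ := ne_cs_s (by omega)
  have n3 : p.succ ≠ (q.castSucc : Fin (k+1)) := ne_s_cs (by omega)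
  have n4 : p.succ ≠ q.succ := ne_s_s (by omega)
  funext r
  rcases eq_or_ne r p.castSucc with rfl | e1
  · rw [stepFun_other _ _ n1 n2, stepFun_cs, stepFun_cs, stepFun_other _ _ n3 n4]
  rcases eq_or_ne r p.succ with rfl | e2
  · rw [stepFun_other _ _ n3 n4, stepFun_s, stepFun_s, stepFun_other _ _ n1 n2]
  rcases eq_or_ne r q.castSucc with rfl | e3
  · rw [stepFun_cs, stepFun_other _ _ n2.symm n4.symm, stepFun_other _ _ n1.symm n3.symm,
      stepFun_cs]
  rcases eq_or_ne r q.succ with rfl | e4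
  · rw [stepFun_s, stepFun_other _ _ n1.symm n3.symm, stepFun_other _ _ n2.symm n4.symm,
      stepFun_s]
  · rw [stepFun_other _ _ e3 e4, stepFun_other _ _ e1 e2, stepFun_other _ _ e1 e2,
      stepFun_other _ _ e3 e4]

lemma rev_disj_eq {v : Fin (k+1) → ℕ} {p q : Fin k} (h : (p:ℕ) + 1 < (q:ℕ)) :
    rstepFun k (rstepFun k v p) q = rstepFun k (rstepFun k v q) p := by
  have n1 : p.castSucc ≠ (q.castSucc : Fin (k+1)) := ne_cs_cs (by omega)
  have n2 : p.castSucc ≠ q.succ := ne_cs_s (by omega)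
  have n3 : p.succ ≠ (q.castSucc : Fin (k+1)) := ne_s_cs (by omega)
  have n4 : p.succ ≠ q.succ := ne_s_s (by omega)
  funext r
  rcases eq_or_ne r p.castSucc with rfl | e1
  · rw [rstepFun_other _ _ n1 n2, rstepFun_cs, rstepFun_cs, rstepFun_other _ _ n3 n4]
  rcases eq_or_ne r p.succ with rfl | e2
  · rw [rstepFun_other _ _ n3 n4, rstepFun_s, rstepFun_s, rstepFun_other _ _ n1 n2]
  rcases eq_or_ne r q.castSucc with rfl | e3
  · rw [rstepFun_cs, rstepFun_other _ _ n2.symm n4.symm, rstepFun_other _ _ n1.symm n3.symm,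
      rstepFun_cs]
  rcases eq_or_ne r q.succ with rfl | e4
  · rw [rstepFun_s, rstepFun_other _ _ n1.symm n3.symm, rstepFun_other _ _ n2.symm n4.symm,
      rstepFun_s]
  · rw [rstepFun_other _ _ e3 e4, rstepFun_other _ _ e1 e2, rstepFun_other _ _ e1 e2,
      rstepFun_other _ _ e3 e4]

lemma fwd_adj_eq {v : Fin (k+1) → ℕ} {p q : Fin k} (hv : (p:ℕ) + 1 = (q:ℕ))
    (e : q.castSucc = p.succ) :
    stepFun k (stepFun k (stepFun k v p) q) p
      = stepFun k (stepFun k (stepFun k v q) p) q := by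
  have n1 : p.castSucc ≠ (q.castSucc : Fin (k+1)) := ne_cs_cs (by omega)
  have n2 : p.castSucc ≠ q.succ := ne_cs_s (by omega)
  have n4 : p.succ ≠ q.succ := ne_s_s (by omega)
  funext r
  rcases eq_or_ne r p.castSucc with rfl | e1
  · conv_lhs => rw [stepFun_cs, ← e, stepFun_cs, stepFun_other _ _ n2.symm n4.symm]
    conv_rhs => rw [stepFun_other _ _ n1 n2, stepFun_cs, ← e, stepFun_cs]
  rcases eq_or_ne r p.succ with rfl | e2
  · conv_lhs => rw [stepFun_s, stepFun_other _ _ n1 n2, stepFun_cs]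
    conv_rhs => rw [← e, stepFun_cs, stepFun_other _ _ n2.symm n4.symm, stepFun_s, e]
  rcases eq_or_ne r q.succ with rfl | e4
  · conv_lhs => rw [stepFun_other _ _ n2.symm n4.symm, stepFun_s, e, stepFun_s]
    conv_rhs => rw [stepFun_s, e, stepFun_s, stepFun_other _ _ n1 n2]
  have e3 : r ≠ q.castSucc := by rw [e]; exact e2
  · conv_lhs => rw [stepFun_other _ _ e1 e2, stepFun_other _ _ e3 e4, stepFun_other _ _ e1 e2]
    conv_rhs => rw [stepFun_other _ _ e3 e4, stepFun_other _ _ e1 e2, stepFun_other _ _ e3 e4]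

lemma rev_adj_eq {v : Fin (k+1) → ℕ} {p q : Fin k} (hv : (p:ℕ) + 1 = (q:ℕ))
    (e : q.castSucc = p.succ) :
    rstepFun k (rstepFun k (rstepFun k v p) q) p
      = rstepFun k (rstepFun k (rstepFun k v q) p) q := by
  have n1 : p.castSucc ≠ (q.castSucc : Fin (k+1)) := ne_cs_cs (by omega)
  have n2 : p.castSucc ≠ q.succ := ne_cs_s (by omega)
  have n4 : p.succ ≠ q.succ := ne_s_s (by omega)
  funext r
  rcases eq_or_ne r p.castSucc with rfl | e1
  · conv_lhs => rw [rstepFun_cs, ← e, rstepFun_cs, rstepFun_other _ _ n2.symm n4.symm]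
    conv_rhs => rw [rstepFun_other _ _ n1 n2, rstepFun_cs, ← e, rstepFun_cs]
  rcases eq_or_ne r p.succ with rfl | e2
  · conv_lhs => rw [rstepFun_s, rstepFun_other _ _ n1 n2, rstepFun_cs]
    conv_rhs => rw [← e, rstepFun_cs, rstepFun_other _ _ n2.symm n4.symm, rstepFun_s, e]
  rcases eq_or_ne r q.succ with rfl | e4
  · conv_lhs => rw [rstepFun_other _ _ n2.symm n4.symm, rstepFun_s, e, rstepFun_s]
    conv_rhs => rw [rstepFun_s, e, rstepFun_s, rstepFun_other _ _ n1 n2]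
  have e3 : r ≠ q.castSucc := by rw [e]; exact e2
  · conv_lhs => rw [rstepFun_other _ _ e1 e2, rstepFun_other _ _ e3 e4, rstepFun_other _ _ e1 e2]
    conv_rhs => rw [rstepFun_other _ _ e3 e4, rstepFun_other _ _ e1 e2, rstepFun_other _ _ e3 e4]


/-! ### The step relation on vertices -/

def RR (s k : ℕ) (a b : GskVertex s k) : Prop := CohStep k a.1 b.1

lemma bddV (a : GskVertex s k) : Bdd s k a.1 := a.2

lemma RR_ne {a b : GskVertex s k} (h : RR s k a b) : a ≠ b := by
  rintro rfl
  obtain ⟨p, h1, -, h3, -⟩ := h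
  omega

lemma rtg_lift {a : GskVertex s k} {bf : Fin (k+1) → ℕ}
    (h : Relation.ReflTransGen (CohStep k) a.1 bf) :
    ∃ b : GskVertex s k, b.1 = bf ∧ Relation.ReflTransGen (RR s k) a b := by
  induction h with
  | refl => exact ⟨a, rfl, Relation.ReflTransGen.refl⟩
  | tail h1 h2 ih =>
    obtain ⟨b, hb, hab⟩ := ih
    subst hb
    exact ⟨⟨_, bdd_of_step (bddV b) h2⟩, rfl, hab.tail h2⟩

/-! ### Forward local confluence -/

lemma lc_fun_lt {v : Fin (k+1) → ℕ} {p q : Fin k} (hlt : (p:ℕ) < (q:ℕ))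
    (hp : v p.castSucc < v p.succ) (hq : v q.castSucc < v q.succ) :
    Relation.Join (Relation.ReflTransGen (CohStep k)) (stepFun k v p) (stepFun k v q) := by
  rcases eq_or_lt_of_le (show (p:ℕ) + 1 ≤ (q:ℕ) from hlt) with hadj | hdisj
  · -- adjacent positions
    have e : q.castSucc = p.succ := Fin.val_injective (by simpa using hadj.symm)
    have hq' : v p.succ < v q.succ := by rw [← e]; exact hq
    have n1 : p.castSucc ≠ (q.castSucc : Fin (k+1)) := ne_cs_cs (by omega)
    have n2 : p.castSucc ≠ q.succ := ne_cs_s (by omega)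
    have n4 : p.succ ≠ q.succ := ne_s_s (by omega)
    have s1 : CohStep k (stepFun k v p) (stepFun k (stepFun k v p) q) := by
      refine cohStep_iff.mpr ⟨q, ?_, rfl⟩
      have h1 : stepFun k v p q.castSucc = v p.castSucc := by rw [e, stepFun_s]
      have h2 : stepFun k v p q.succ = v q.succ := stepFun_other _ _ n2.symm n4.symm
      rw [h1, h2]; omega
    have s2 : CohStep k (stepFun k (stepFun k v p) q)
        (stepFun k (stepFun k (stepFun k v p) q) p) := by
      refine cohStep_iff.mpr ⟨p, ?_, rfl⟩
      have h1 : stepFun k (stepFun k v p) q p.castSucc = v p.succ - 1 := by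
        rw [stepFun_other _ _ n1 n2, stepFun_cs]
      have h2 : stepFun k (stepFun k v p) q p.succ = v q.succ - 1 := by
        rw [← e, stepFun_cs, stepFun_other _ _ n2.symm n4.symm]
      rw [h1, h2]; omega
    have t1 : CohStep k (stepFun k v q) (stepFun k (stepFun k v q) p) := by
      refine cohStep_iff.mpr ⟨p, ?_, rfl⟩
      have h1 : stepFun k v q p.castSucc = v p.castSucc := stepFun_other _ _ n1 n2
      have h2 : stepFun k v q p.succ = v q.succ - 1 := by rw [← e, stepFun_cs]
      rw [h1, h2]; omega
    have t2 : CohStep k (stepFun k (stepFun k v q) p)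
        (stepFun k (stepFun k (stepFun k v q) p) q) := by
      refine cohStep_iff.mpr ⟨q, ?_, rfl⟩
      have h1 : stepFun k (stepFun k v q) p q.castSucc = v p.castSucc := by
        rw [e, stepFun_s, stepFun_other _ _ n1 n2]
      have h2 : stepFun k (stepFun k v q) p q.succ = v p.succ := by
        rw [stepFun_other _ _ n2.symm n4.symm, stepFun_s, e]
      rw [h1, h2]; omega
    refine ⟨stepFun k (stepFun k (stepFun k v p) q) p,
      Relation.ReflTransGen.head s1 (Relation.ReflTransGen.single s2), ?_⟩
    rw [fwd_adj_eq hadj e]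
    exact Relation.ReflTransGen.head t1 (Relation.ReflTransGen.single t2)
  · -- disjoint positions
    have n1 : p.castSucc ≠ (q.castSucc : Fin (k+1)) := ne_cs_cs (by omega)
    have n2 : p.castSucc ≠ q.succ := ne_cs_s (by omega)
    have n3 : p.succ ≠ (q.castSucc : Fin (k+1)) := ne_s_cs (by omega)
    have n4 : p.succ ≠ q.succ := ne_s_s (by omega)
    refine ⟨stepFun k (stepFun k v p) q, Relation.ReflTransGen.single ?_, ?_⟩
    · refine cohStep_iff.mpr ⟨q, ?_, rfl⟩
      rw [stepFun_other _ _ n1.symm n3.symm, stepFun_other _ _ n2.symm n4.symm]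
      exact hq
    · rw [fwd_disj_eq hdisj]
      refine Relation.ReflTransGen.single (cohStep_iff.mpr ⟨p, ?_, rfl⟩)
      rw [stepFun_other _ _ n1 n2, stepFun_other _ _ n3 n4]
      exact hp

lemma lc_fwd (a b c : GskVertex s k) (hb : RR s k a b) (hc : RR s k a c) :
    Relation.Join (Relation.ReflTransGen (RR s k)) b c := by
  obtain ⟨p, hp, hbf⟩ := cohStep_iff.mp hb
  obtain ⟨q, hq, hcf⟩ := cohStep_iff.mp hc
  suffices h : Relation.Join (Relation.ReflTransGen (CohStep k)) b.1 c.1 by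
    obtain ⟨d, h1, h2⟩ := h
    obtain ⟨d1, hd1, hbd⟩ := rtg_lift h1
    obtain ⟨d2, hd2, hcd⟩ := rtg_lift h2
    have hdd : d1 = d2 := Subtype.ext (by rw [hd1, hd2])
    exact ⟨d1, hbd, hdd ▸ hcd⟩
  rcases Nat.lt_trichotomy (p:ℕ) (q:ℕ) with hlt | heq | hlt
  · rw [hbf, hcf]; exact lc_fun_lt hlt hp hq
  · have : p = q := Fin.val_injective heq
    subst this
    rw [hbf, hcf]
    exact ⟨_, Relation.ReflTransGen.refl, Relation.ReflTransGen.refl⟩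
  · rw [hbf, hcf]
    obtain ⟨d, h1, h2⟩ := lc_fun_lt hlt hq hp
    exact ⟨d, h2, h1⟩

/-! ### Reverse local confluence -/

lemma lc_rev_lt (a b c : GskVertex s k) (p q : Fin k) (hlt : (p:ℕ) < (q:ℕ))
    (hp : a.1 p.succ ≤ a.1 p.castSucc) (hq : a.1 q.succ ≤ a.1 q.castSucc)
    (hbf : b.1 = rstepFun k a.1 p) (hcf : c.1 = rstepFun k a.1 q) :
    Relation.Join (Relation.ReflTransGen (fun x y : GskVertex s k => RR s k y x)) b c := by
  have hbp : a.1 p.succ ≤ s + (p:ℕ) := by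
    have h2 := bddV b p.castSucc
    rw [hbf, rstepFun_cs] at h2
    simpa using h2
  have hcq : a.1 q.succ ≤ s + (q:ℕ) := by
    have h2 := bddV c q.castSucc
    rw [hcf, rstepFun_cs] at h2
    simpa using h2
  have hapc : a.1 p.castSucc ≤ s + (p:ℕ) := by
    have := bddV a p.castSucc; simpa using this
  rcases eq_or_lt_of_le (show (p:ℕ) + 1 ≤ (q:ℕ) from hlt) with hadj | hdisj
  · -- adjacent positions
    have e : q.castSucc = p.succ := Fin.val_injective (by simpa using hadj.symm)
    have hq' : a.1 q.succ ≤ a.1 p.succ := by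
      have : a.1 q.castSucc = a.1 p.succ := by rw [e]
      omega
    have n1 : p.castSucc ≠ (q.castSucc : Fin (k+1)) := ne_cs_cs (by omega)
    have n2 : p.castSucc ≠ q.succ := ne_cs_s (by omega)
    have n4 : p.succ ≠ q.succ := ne_s_s (by omega)
    have hb_qs : b.1 q.succ = a.1 q.succ := by rw [hbf, rstepFun_other _ _ n2.symm n4.symm]
    have hb_qc : b.1 q.castSucc = a.1 p.castSucc + 1 := by rw [hbf, e, rstepFun_s]
    have hb_pc : b.1 p.castSucc = a.1 p.succ := by rw [hbf, rstepFun_cs]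
    have hx1bdd : Bdd s k (rstepFun k b.1 q) :=
      bdd_rstepFun (bddV b) q (by rw [hb_qs]; omega)
    set x1 : GskVertex s k := ⟨rstepFun k b.1 q, hx1bdd⟩ with hx1
    have s1 : RR s k x1 b := cohStep_rev_iff.mpr ⟨q, by rw [hb_qs, hb_qc]; omega, rfl⟩
    have hx1_ps : x1.1 p.succ = a.1 q.succ := by
      show rstepFun k b.1 q p.succ = _
      rw [← e, rstepFun_cs, hb_qs]
    have hx1_pc : x1.1 p.castSucc = a.1 p.succ := by
      show rstepFun k b.1 q p.castSucc = _
      rw [rstepFun_other _ _ n1 n2, hb_pc]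
    have hubdd : Bdd s k (rstepFun k x1.1 p) :=
      bdd_rstepFun x1.2 p (by rw [hx1_ps]; omega)
    set u : GskVertex s k := ⟨rstepFun k x1.1 p, hubdd⟩ with hu
    have s2 : RR s k u x1 := cohStep_rev_iff.mpr ⟨p, by rw [hx1_ps, hx1_pc]; omega, rfl⟩
    have hc_pc : c.1 p.castSucc = a.1 p.castSucc := by rw [hcf, rstepFun_other _ _ n1 n2]
    have hc_ps : c.1 p.succ = a.1 q.succ := by rw [hcf, ← e, rstepFun_cs]
    have hc_qs : c.1 q.succ = a.1 p.succ + 1 := by rw [hcf, rstepFun_s, e]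
    have hy1bdd : Bdd s k (rstepFun k c.1 p) :=
      bdd_rstepFun (bddV c) p (by rw [hc_ps]; omega)
    set y1 : GskVertex s k := ⟨rstepFun k c.1 p, hy1bdd⟩ with hy1
    have t1 : RR s k y1 c := cohStep_rev_iff.mpr ⟨p, by rw [hc_ps, hc_pc]; omega, rfl⟩
    have hy1_qc : y1.1 q.castSucc = a.1 p.castSucc + 1 := by
      show rstepFun k c.1 p q.castSucc = _
      rw [e, rstepFun_s, hc_pc]
    have hy1_qs : y1.1 q.succ = a.1 p.succ + 1 := by
      show rstepFun k c.1 p q.succ = _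
      rw [rstepFun_other _ _ n2.symm n4.symm, hc_qs]
    have hu'bdd : Bdd s k (rstepFun k y1.1 q) :=
      bdd_rstepFun y1.2 q (by rw [hy1_qs]; omega)
    set u' : GskVertex s k := ⟨rstepFun k y1.1 q, hu'bdd⟩ with hu'
    have t2 : RR s k u' y1 := cohStep_rev_iff.mpr ⟨q, by rw [hy1_qs, hy1_qc]; omega, rfl⟩
    have huu : u' = u := by
      refine Subtype.ext ?_
      show rstepFun k (rstepFun k c.1 p) q = rstepFun k (rstepFun k b.1 q) p
      rw [hbf, hcf, rev_adj_eq hadj e]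
    exact ⟨u, Relation.ReflTransGen.head s1 (Relation.ReflTransGen.single s2),
      huu ▸ Relation.ReflTransGen.head t1 (Relation.ReflTransGen.single t2)⟩
  · -- disjoint positions
    have n1 : p.castSucc ≠ (q.castSucc : Fin (k+1)) := ne_cs_cs (by omega)
    have n2 : p.castSucc ≠ q.succ := ne_cs_s (by omega)
    have n3 : p.succ ≠ (q.castSucc : Fin (k+1)) := ne_s_cs (by omega)
    have n4 : p.succ ≠ q.succ := ne_s_s (by omega)
    have hb_qs : b.1 q.succ = a.1 q.succ := by rw [hbf, rstepFun_other _ _ n2.symm n4.symm]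
    have hb_qc : b.1 q.castSucc = a.1 q.castSucc := by
      rw [hbf, rstepFun_other _ _ n1.symm n3.symm]
    have hx1bdd : Bdd s k (rstepFun k b.1 q) :=
      bdd_rstepFun (bddV b) q (by rw [hb_qs]; omega)
    set x1 : GskVertex s k := ⟨rstepFun k b.1 q, hx1bdd⟩ with hx1
    have s1 : RR s k x1 b := cohStep_rev_iff.mpr ⟨q, by rw [hb_qs, hb_qc]; omega, rfl⟩
    have hc_pc : c.1 p.castSucc = a.1 p.castSucc := by rw [hcf, rstepFun_other _ _ n1 n2]
    have hc_ps : c.1 p.succ = a.1 p.succ := by rw [hcf, rstepFun_other _ _ n3 n4]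
    have hy1bdd : Bdd s k (rstepFun k c.1 p) :=
      bdd_rstepFun (bddV c) p (by rw [hc_ps]; omega)
    set y1 : GskVertex s k := ⟨rstepFun k c.1 p, hy1bdd⟩ with hy1
    have t1 : RR s k y1 c := cohStep_rev_iff.mpr ⟨p, by rw [hc_ps, hc_pc]; omega, rfl⟩
    have hxy : y1 = x1 := by
      refine Subtype.ext ?_
      show rstepFun k c.1 p = rstepFun k b.1 q
      rw [hbf, hcf, ← rev_disj_eq hdisj]
    exact ⟨x1, Relation.ReflTransGen.single s1,
      hxy ▸ Relation.ReflTransGen.single t1⟩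

lemma lc_rev (a b c : GskVertex s k) (hb : RR s k b a) (hc : RR s k c a) :
    Relation.Join (Relation.ReflTransGen (fun x y : GskVertex s k => RR s k y x)) b c := by
  obtain ⟨p, hp, hbf⟩ := cohStep_rev_iff.mp hb
  obtain ⟨q, hq, hcf⟩ := cohStep_rev_iff.mp hc
  rcases Nat.lt_trichotomy (p:ℕ) (q:ℕ) with hlt | heq | hlt
  · exact lc_rev_lt a b c p q hlt hp hq hbf hcf
  · have : p = q := Fin.val_injective heq
    subst this
    have : b = c := Subtype.ext (hbf.trans hcf.symm)
    subst this
    exact ⟨b, Relation.ReflTransGen.refl, Relation.ReflTransGen.refl⟩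
  · obtain ⟨d, h1, h2⟩ := lc_rev_lt a c b q p hlt hq hp hcf hbf
    exact ⟨d, h2, h1⟩

/-! ### Well-foundedness -/

lemma wf_fwd : WellFounded (fun a b : GskVertex s k => RR s k b a) :=
  Subrelation.wf (fun {a b} h => M_lt h)
    (InvImage.wf (fun v : GskVertex s k => M k v.1) Nat.lt_wfRel.wf)

lemma M_bound (a : GskVertex s k) :
    M k a.1 ≤ ∑ j : Fin (k+1), (j:ℕ) * (s + (j:ℕ)) :=
  Finset.sum_le_sum fun j _ => Nat.mul_le_mul_left _ (a.2 j)

lemma wf_bwd : WellFounded (RR s k) := by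
  have hsub : Subrelation (RR s k)
      (InvImage Nat.lt (fun v : GskVertex s k =>
        (∑ j : Fin (k+1), (j:ℕ) * (s + (j:ℕ))) - M k v.1)) := by
    intro a b h
    have h1 := M_lt (show CohStep k a.1 b.1 from h)
    have h2 := M_bound (s := s) a
    show (∑ j : Fin (k+1), (j:ℕ) * (s + (j:ℕ))) - M k a.1
        < (∑ j : Fin (k+1), (j:ℕ) * (s + (j:ℕ))) - M k b.1
    omega
  exact Subrelation.wf hsub (InvImage.wf _ Nat.lt_wfRel.wf)

/-! ### Sources and sinks -/

lemma sink_iff (w : GskVertex s k) :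
    (∀ x, ¬ RR s k w x) ↔ ∀ p : Fin k, w.1 p.succ ≤ w.1 p.castSucc := by
  constructor
  · intro h p
    by_contra hlt
    push_neg at hlt
    exact h ⟨stepFun k w.1 p, bdd_stepFun (bddV w) p⟩ (cohStep_iff.mpr ⟨p, hlt, rfl⟩)
  · rintro h x ⟨p, h1, -⟩
    exact absurd h1 (not_lt.mpr (h p))

lemma source_iff (o : GskVertex s k) :
    (∀ x, ¬ RR s k x o) ↔ StrictMono o.1 := by
  rw [Fin.strictMono_iff_lt_succ]
  constructor
  · intro h p
    by_contra hle
    push_neg at hle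
    have hbp : o.1 p.succ ≤ s + (p:ℕ) :=
      le_trans hle (by have := bddV o p.castSucc; simpa using this)
    exact h ⟨rstepFun k o.1 p, bdd_rstepFun (bddV o) p hbp⟩
      (cohStep_rev_iff.mpr ⟨p, hle, rfl⟩)
  · intro h x hx
    obtain ⟨p, h1, -⟩ := cohStep_rev_iff.mp hx
    exact absurd (h p) (not_lt.mpr h1)

/-! ### Reachability -/

lemma reachable_iff {a b : GskVertex s k} :
    (Gsk s k).Reachable a b ↔ EqvGen (RR s k) a b := by
  rw [SimpleGraph.reachable_iff_reflTransGen]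
  constructor
  · intro h
    induction h with
    | refl => exact EqvGen.refl _
    | tail h1 h2 ih =>
      rcases (SimpleGraph.fromRel_adj _ _ _).mp h2 with ⟨-, h | h⟩
      · exact EqvGen.trans _ _ _ ih (EqvGen.rel _ _ h)
      · exact EqvGen.trans _ _ _ ih (EqvGen.symm _ _ (EqvGen.rel _ _ h))
  · intro h
    induction h with
    | rel x y h =>
      exact Relation.ReflTransGen.single
        ((SimpleGraph.fromRel_adj _ _ _).mpr ⟨RR_ne h, Or.inl h⟩)
    | refl x => exact Relation.ReflTransGen.refl
    | symm x y _ ih => exact (letI := (Gsk s k).symm; Relation.ReflTransGen.symmetric (r := (Gsk s k).Adj)).symm _ _ ih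
    | trans x y z _ _ ih1 ih2 => exact ih1.trans ih2

end Stmt5Aux

open Stmt5Aux Relation in
/-- Each connected component of `G_{s,k}` contains exactly one out-vertex (a strictly
increasing tuple) and exactly one in-vertex (a weakly decreasing tuple, i.e. one from
which no directed edge starts). -/
theorem stmt5 (s k : ℕ) (hs : 1 ≤ s) (hk : 1 ≤ k) (v : GskVertex s k) :
    (∃! o : GskVertex s k, StrictMono o.1 ∧ (Gsk s k).Reachable v o) ∧
    (∃! w : GskVertex s k, (∀ p : Fin k, w.1 p.succ ≤ w.1 p.castSucc) ∧
      (Gsk s k).Reachable v w) := by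
  constructor
  · -- unique out-vertex
    obtain ⟨o, ho1, ho2⟩ := exists_nf (r := fun a b : GskVertex s k => RR s k b a) wf_bwd v
    have hvo : (Gsk s k).Reachable v o :=
      reachable_iff.mpr (eqvGen_swap (rtg_eqvGen ho1))
    refine ⟨o, ⟨(source_iff o).mp (fun x hx => ho2 x hx), hvo⟩, ?_⟩
    rintro o' ⟨ho'1, ho'2⟩
    have conf := newman (r := fun a b : GskVertex s k => RR s k b a) wf_bwd
      (fun a b c h1 h2 => lc_rev a b c h1 h2)
    have h1 : EqvGen (fun a b : GskVertex s k => RR s k b a) o' o :=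
      eqvGen_swap (reachable_iff.mp (ho'2.symm.trans hvo))
    exact nf_unique conf h1 (fun x hx => (source_iff o').mpr ho'1 x hx)
      (fun x hx => ho2 x hx)
  · -- unique in-vertex
    obtain ⟨w, hw1, hw2⟩ := exists_nf (r := RR s k) wf_fwd v
    have hvw : (Gsk s k).Reachable v w := reachable_iff.mpr (rtg_eqvGen hw1)
    refine ⟨w, ⟨(sink_iff w).mp hw2, hvw⟩, ?_⟩
    rintro w' ⟨hw'1, hw'2⟩
    have conf := newman (r := RR s k) wf_fwd (fun a b c h1 h2 => lc_fwd a b c h1 h2)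
    have h1 : EqvGen (RR s k) w' w := reachable_iff.mp (hw'2.symm.trans hvw)
    exact nf_unique conf h1 ((sink_iff w').mpr hw'1) hw2
end

section
/- The graph G_{s,k} has exactly binomial(s+k+1, k+1) connected components. -/
def ins (x : ℕ) : List ℕ → List ℕ
  | [] => [x]
  | m :: M => if x < m then x :: m :: M else m :: ins (x+1) M

def Phi (l : List ℕ) : List ℕ := l.foldr ins []

lemma ins_ins : ∀ (M : List ℕ) (a b : ℕ), a < b → ins a (ins b M) = ins (b-1) (ins a M) := by
  intro M
  induction M with
  | nil =>
    intro a b h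
    have hb1 : b - 1 + 1 = b := by omega
    simp only [ins, if_pos h, if_neg (Nat.not_lt.2 (Nat.le_sub_one_of_lt h)), hb1]
  | cons m M ih =>
    intro a b h
    have hb1 : b - 1 + 1 = b := by omega
    by_cases hbm : b < m
    · have ham : a < m := h.trans hbm
      simp only [ins, if_pos hbm, if_pos ham, if_pos h,
        if_neg (Nat.not_lt.2 (Nat.le_sub_one_of_lt h)), hb1, if_pos hbm]
    · by_cases ham : a < m
      · simp only [ins, if_neg hbm, if_pos ham,
          if_neg (Nat.not_lt.2 ((Nat.le_sub_one_of_lt (Nat.lt_of_lt_of_le ham (Nat.not_lt.1 hbm))))),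
          hb1, if_neg hbm]
      · have h1 : ¬ b - 1 < m := Nat.not_lt.2 (Nat.le_sub_one_of_lt (Nat.lt_of_le_of_lt (Nat.not_lt.1 ham) h))
        simp only [ins, if_neg hbm, if_neg ham, if_neg h1, hb1]
        have := ih (a+1) (b+1) (by omega)
        simpa [hb1] using this

lemma Phi_sorted : ∀ l : List ℕ, l.Pairwise (· < ·) → Phi l = l := by
  intro l
  induction l with
  | nil => intro _; rfl
  | cons x l ih =>
    intro h
    have h1 : Phi (x :: l) = ins x (Phi l) := rfl
    rw [h1, ih h.of_cons]
    cases l with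
    | nil => rfl
    | cons m M =>
      have : x < m := (List.pairwise_cons.1 h).1 m (by simp)
      simp [ins, this]

lemma Phi_append (A B : List ℕ) : Phi (A ++ B) = A.foldr ins (Phi B) :=
  List.foldr_append ..

lemma list_split (l : List ℕ) (p : ℕ) (h : p + 1 < l.length) :
    l = l.take p ++ l[p] :: l[p+1]'h :: l.drop (p+2) := by
  conv_lhs => rw [← List.take_append_drop p l]
  rw [List.drop_eq_getElem_cons (by omega), List.drop_eq_getElem_cons h]

lemma Phi_invariant {k : ℕ} {v w : Fin (k+1) → ℕ} (h : CohStep k v w) :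
    Phi (List.ofFn w) = Phi (List.ofFn v) := by
  obtain ⟨p, hlt, h1, h2, h3⟩ := h
  have hpk : (p:ℕ) < k := p.2
  have hp : (p:ℕ)+1 < (List.ofFn v).length := by simp only [List.length_ofFn]; omega
  have hp' : (p:ℕ)+1 < (List.ofFn w).length := by simp only [List.length_ofFn]; omega
  have splitv := list_split (List.ofFn v) p hp
  have splitw := list_split (List.ofFn w) p hp'
  have ev0 : (List.ofFn v)[(p:ℕ)]'(by omega) = v p.castSucc := by
    simp only [List.getElem_ofFn]; rfl
  have ev1 : (List.ofFn v)[(p:ℕ)+1]'hp = v p.succ := by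
    simp only [List.getElem_ofFn]; rfl
  have ew0 : (List.ofFn w)[(p:ℕ)]'(by omega) = v p.succ - 1 := by
    simp only [List.getElem_ofFn]; rw [← h1]; rfl
  have ew1 : (List.ofFn w)[(p:ℕ)+1]'hp' = v p.castSucc := by
    simp only [List.getElem_ofFn]; rw [← h2]; rfl
  have htake : (List.ofFn w).take p = (List.ofFn v).take p := by
    apply List.ext_getElem (by simp)
    intro i hi1 hi2
    have hip : i < (p:ℕ) := by simp at hi1; omega
    simp only [List.getElem_take, List.getElem_ofFn]
    exact h3 _ (Fin.ne_of_val_ne (by simpa using hip.ne))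
      (Fin.ne_of_val_ne (by simp; omega))
  have hdrop : (List.ofFn w).drop ((p:ℕ)+2) = (List.ofFn v).drop ((p:ℕ)+2) := by
    apply List.ext_getElem (by simp)
    intro i hi1 hi2
    simp only [List.getElem_drop, List.getElem_ofFn]
    exact h3 _ (Fin.ne_of_val_ne (by simp; omega)) (Fin.ne_of_val_ne (by simp; omega))
  rw [splitv, splitw, htake, hdrop, ev0, ev1, ew0, ew1]
  rw [Phi_append, Phi_append]
  congr 1
  show ins _ (ins _ _) = ins _ (ins _ _)
  exact (ins_ins _ _ _ hlt).symm

lemma CohStep.ne' {k : ℕ} {v w : Fin (k+1) → ℕ} (h : CohStep k v w) : v ≠ w := by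
  obtain ⟨p, hlt, h1, h2, h3⟩ := h
  intro he; subst he
  exact absurd (h2 ▸ hlt) (lt_irrefl _)

lemma step_up {s k : ℕ} (v : GskVertex s k) (h : ¬ StrictMono v.1) :
    ∃ u : GskVertex s k, CohStep k u.1 v.1 ∧ (∑ j, u.1 j) = (∑ j, v.1 j) + 1 := by
  rw [Fin.strictMono_iff_lt_succ] at h
  push_neg at h
  obtain ⟨p, hle⟩ := h
  have hne : p.castSucc ≠ p.succ := (Fin.castSucc_lt_succ (i := p)).ne
  set f : Fin (k+1) → ℕ := fun q =>
    if q = p.castSucc then v.1 p.succ else if q = p.succ then v.1 p.castSucc + 1 else v.1 q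
    with hf
  have hfc : f p.castSucc = v.1 p.succ := by simp [hf]
  have hfs : f p.succ = v.1 p.castSucc + 1 := by simp [hf, hne.symm]
  have hfq : ∀ q, q ≠ p.castSucc → q ≠ p.succ → f q = v.1 q := by
    intro q h1 h2; simp [hf, h1, h2]
  have hbound : ∀ j : Fin (k+1), f j ≤ s + (j : ℕ) := by
    intro j
    by_cases h1 : j = p.castSucc
    · subst h1; rw [hfc]
      exact le_trans hle (v.2 p.castSucc)
    · by_cases h2 : j = p.succ
      · subst h2; rw [hfs]
        have := v.2 p.castSucc
        have : (p.castSucc : ℕ) + 1 = (p.succ : ℕ) := by simp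
        omega
      · rw [hfq j h1 h2]; exact v.2 j
  refine ⟨⟨f, hbound⟩, ⟨p, ?_, ?_, ?_, ?_⟩, ?_⟩
  · show f p.castSucc < f p.succ
    rw [hfc, hfs]; omega
  · show v.1 p.castSucc = f p.succ - 1
    rw [hfs]; omega
  · show v.1 p.succ = f p.castSucc
    rw [hfc]
  · intro q h1 h2; exact (hfq q h1 h2).symm
  · show ∑ j, f j = _
    have key : ∀ (g : Fin (k+1) → ℕ), ∑ j, g j =
        g p.castSucc + g p.succ + ∑ j ∈ (Finset.univ.erase p.castSucc).erase p.succ, g j := by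
      intro g
      rw [← Finset.add_sum_erase _ g (Finset.mem_univ p.castSucc),
        ← Finset.add_sum_erase _ g (Finset.mem_erase.2 ⟨hne.symm, Finset.mem_univ _⟩)]
      ring
    rw [key f, key v.1, hfc, hfs]
    have hrest : ∑ j ∈ (Finset.univ.erase p.castSucc).erase p.succ, f j =
        ∑ j ∈ (Finset.univ.erase p.castSucc).erase p.succ, v.1 j := by
      apply Finset.sum_congr rfl
      intro x hx
      simp only [Finset.mem_erase] at hx
      exact hfq x hx.2.1 hx.1
    omega

lemma sum_le_N {s k : ℕ} (v : GskVertex s k) :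
    ∑ j, v.1 j ≤ ∑ j : Fin (k+1), (s + (j:ℕ)) :=
  Finset.sum_le_sum fun j _ => v.2 j

lemma exists_inc {s k : ℕ} (v : GskVertex s k) :
    ∃ u : GskVertex s k, StrictMono u.1 ∧
      (Gsk s k).connectedComponentMk u = (Gsk s k).connectedComponentMk v := by
  suffices h : ∀ n (v : GskVertex s k), (∑ j : Fin (k+1), (s + (j:ℕ))) - (∑ j, v.1 j) ≤ n →
      ∃ u : GskVertex s k, StrictMono u.1 ∧
        (Gsk s k).connectedComponentMk u = (Gsk s k).connectedComponentMk v from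
    h _ v le_rfl
  intro n
  induction n with
  | zero =>
    intro v hn
    by_cases h : StrictMono v.1
    · exact ⟨v, h, rfl⟩
    · obtain ⟨u, hstep, hsum⟩ := step_up v h
      have h1 := sum_le_N u
      have h2 := sum_le_N v
      omega
  | succ n ih =>
    intro v hn
    by_cases h : StrictMono v.1
    · exact ⟨v, h, rfl⟩
    · obtain ⟨u, hstep, hsum⟩ := step_up v h
      have hle := sum_le_N u
      have hadj : (Gsk s k).Adj u v := by
        rw [Gsk, SimpleGraph.fromRel_adj]
        exact ⟨fun he => hstep.ne' (congrArg Subtype.val he), Or.inl hstep⟩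
      obtain ⟨u', hu1, hu2⟩ := ih u (by omega)
      exact ⟨u', hu1, hu2.trans (SimpleGraph.ConnectedComponent.sound hadj.reachable)⟩

lemma adj_phi {s k : ℕ} {x y : GskVertex s k} (h : (Gsk s k).Adj x y) :
    Phi (List.ofFn x.1) = Phi (List.ofFn y.1) := by
  rw [Gsk, SimpleGraph.fromRel_adj] at h
  rcases h.2 with h | h
  · exact (Phi_invariant h).symm
  · exact Phi_invariant h

lemma walk_phi {s k : ℕ} {x y : GskVertex s k} (p : (Gsk s k).Walk x y) :
    Phi (List.ofFn x.1) = Phi (List.ofFn y.1) := by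
  induction p with
  | nil => rfl
  | cons h _ ih => exact (adj_phi h).trans ih

lemma inc_unique {s k : ℕ} {u v : GskVertex s k} (hu : StrictMono u.1) (hv : StrictMono v.1)
    (h : (Gsk s k).connectedComponentMk u = (Gsk s k).connectedComponentMk v) : u = v := by
  have key := congrArg (SimpleGraph.ConnectedComponent.lift
    (fun x : GskVertex s k => Phi (List.ofFn x.1)) (fun x y p _ => walk_phi p)) h
  simp only [SimpleGraph.ConnectedComponent.lift_mk] at key
  rw [Phi_sorted _ (List.pairwise_ofFn.2 hu), Phi_sorted _ (List.pairwise_ofFn.2 hv)]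
    at key
  exact Subtype.ext (List.ofFn_injective key)

lemma comp_bij (s k : ℕ) :
    Function.Bijective (fun u : {u : GskVertex s k // StrictMono u.1} =>
      (Gsk s k).connectedComponentMk u.1) := by
  constructor
  · intro a b hab
    exact Subtype.ext (inc_unique a.2 b.2 hab)
  · intro c
    induction c using SimpleGraph.ConnectedComponent.ind with
    | _ v =>
      obtain ⟨u, hu1, hu2⟩ := exists_inc v
      exact ⟨⟨u, hu1⟩, hu2⟩

lemma gap_lemma {k : ℕ} (f : Fin (k+1) → ℕ) (hf : StrictMono f) :
    ∀ d i, (h : i + d ≤ k) → f ⟨i, by omega⟩ + d ≤ f ⟨i + d, by omega⟩ := by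
  intro d
  induction d with
  | zero => intro i h; simp
  | succ d ih =>
    intro i h
    have h1 := ih i (by omega)
    have h2 : f ⟨i + d, by omega⟩ < f ⟨i + (d + 1), by omega⟩ := by
      apply hf
      simp [Fin.lt_def]
    omega

def incEquiv (s k : ℕ) : {u : GskVertex s k // StrictMono u.1} ≃
    {f : Fin (k+1) → Fin (s+k+1) // StrictMono f} where
  toFun u := ⟨fun j => ⟨u.1.1 j, by
      have h1 := u.1.2 j
      have h2 : (j : ℕ) ≤ k := by omega
      omega⟩, by
    intro a b hab
    simp only [Fin.lt_def]
    exact u.2 hab⟩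
  invFun f := ⟨⟨fun j => (f.1 j : ℕ), by
      intro j
      have hmono : StrictMono (fun j : Fin (k+1) => ((f.1 j : ℕ))) := by
        intro a b hab
        exact f.2 hab
      have hj : (j : ℕ) ≤ k := by omega
      have hg := gap_lemma _ hmono (k - (j : ℕ)) (j : ℕ) (by omega)
      have he : (⟨(j:ℕ), by omega⟩ : Fin (k+1)) = j := by
        apply Fin.ext; rfl
      rw [he] at hg
      have hg' : ((f.1 j : ℕ)) + (k - (j:ℕ)) ≤
          ((f.1 ⟨(j:ℕ) + (k - (j:ℕ)), by omega⟩ : Fin (s+k+1)) : ℕ) := hg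
      have hl : ((f.1 ⟨(j:ℕ) + (k - (j:ℕ)), by omega⟩ : Fin (s+k+1)) : ℕ) < s + k + 1 :=
        Fin.is_lt _
      show ((f.1 j : ℕ)) ≤ s + (j:ℕ)
      omega⟩, by
    intro a b hab
    exact f.2 hab⟩
  left_inv u := by
    apply Subtype.ext; apply Subtype.ext; rfl
  right_inv f := by
    apply Subtype.ext; funext j; apply Fin.ext; rfl

def smEquiv (n r : ℕ) : {f : Fin r → Fin n // StrictMono f} ≃
    {t : Finset (Fin n) // t.card = r} where
  toFun f := ⟨Finset.image f.1 Finset.univ, by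
    rw [Finset.card_image_of_injective _ f.2.injective, Finset.card_univ, Fintype.card_fin]⟩
  invFun t := ⟨t.1.orderEmbOfFin t.2, (t.1.orderEmbOfFin t.2).strictMono⟩
  left_inv f := by
    apply Subtype.ext
    exact (Finset.orderEmbOfFin_unique _ (fun x => Finset.mem_image_of_mem _ (Finset.mem_univ x))
      f.2).symm
  right_inv t := by
    apply Subtype.ext
    apply Finset.coe_injective
    rw [Finset.coe_image, Finset.coe_univ, Set.image_univ]
    exact Finset.range_orderEmbOfFin _ _

/-- The graph `G_{s,k}` has exactly `binomial(s+k+1, k+1)` connected components. -/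
theorem stmt6 (s k : ℕ) (hs : 1 ≤ s) (hk : 1 ≤ k) :
    Nat.card (Gsk s k).ConnectedComponent = (s + k + 1).choose (k + 1) := by
  rw [← Nat.card_eq_of_bijective _ (comp_bij s k)]
  rw [Nat.card_congr ((incEquiv s k).trans (smEquiv (s+k+1) (k+1)))]
  rw [Nat.card_eq_fintype_card, Fintype.card_finset_len, Fintype.card_fin]
end

section
/- The connected component of the out-vertex (1, 2, ..., k+1) in the graph G_{1,k} is isomorphic to the Cayley graph of the symmetric group S_{k+1} with respect to the generating set of adjacent transpositions {(1 2), (2 3), ..., (k k+1)}. -/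
open Finset Equiv

variable {k : ℕ}

/-- The code vector of a permutation. -/
def pcode (σ : Equiv.Perm (Fin (k + 1))) : Fin (k + 1) → ℕ :=
  fun j => 1 + (Finset.univ.filter fun i => i < j ∧ σ i < σ j).card

lemma pcode_le (σ : Equiv.Perm (Fin (k + 1))) (j : Fin (k + 1)) :
    pcode σ j ≤ 1 + (j : ℕ) := by
  unfold pcode
  have h1 : (Finset.univ.filter fun i => i < j ∧ σ i < σ j) ⊆ Finset.Iio j := by
    intro i hi; simp at hi ⊢; exact hi.1
  have := Finset.card_le_card h1
  rw [Fin.card_Iio] at this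
  omega

lemma card_filter_lt_succ (P : Fin (k + 1) → Prop) [DecidablePred P] (p : Fin k) :
    (Finset.univ.filter fun i => i < p.succ ∧ P i).card =
      (Finset.univ.filter fun i => i < p.castSucc ∧ P i).card +
        if P p.castSucc then 1 else 0 := by
  have h : ∀ i : Fin (k + 1), (i < p.succ ∧ P i) ↔
      ((i < p.castSucc ∧ P i) ∨ (i = p.castSucc ∧ P i)) := by
    intro i
    have h1 : i < p.succ ↔ (i : ℕ) < (p : ℕ) + 1 := by
      rw [Fin.lt_def, Fin.val_succ]
    have h2 : i < p.castSucc ↔ (i : ℕ) < (p : ℕ) := by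
      rw [Fin.lt_def, Fin.coe_castSucc]
    have h3 : i = p.castSucc ↔ (i : ℕ) = (p : ℕ) := by
      rw [Fin.ext_iff, Fin.coe_castSucc]
    rw [h1, h2, h3]
    constructor
    · rintro ⟨hl, hp⟩
      rcases Nat.lt_succ_iff_lt_or_eq.mp hl with h' | h'
      · exact Or.inl ⟨h', hp⟩
      · exact Or.inr ⟨h', hp⟩
    · rintro (⟨hl, hp⟩ | ⟨hl, hp⟩) <;> exact ⟨by omega, hp⟩
  rw [Finset.filter_congr (fun i _ => h i), Finset.filter_or,
    Finset.card_union_of_disjoint]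
  · congr 1
    split_ifs with hP
    · rw [show (Finset.univ.filter fun i => i = p.castSucc ∧ P i) = {p.castSucc} by
        ext i; simp; intro hi; subst hi; exact hP]
      · simp
    · rw [show (Finset.univ.filter fun i => i = p.castSucc ∧ P i) = ∅ by
        ext i; simp; intro hi; subst hi; exact fun h' => absurd h' hP]
      simp
  · rw [Finset.disjoint_filter]
    rintro i _ ⟨hlt, -⟩ ⟨rfl, -⟩
    exact absurd hlt (lt_irrefl _)

lemma swap_lt_of_lt {p : Fin k} {j i : Fin (k + 1)} (hja : j ≠ p.castSucc)
    (hjb : j ≠ p.succ) (hij : i < j) : Equiv.swap p.castSucc p.succ i < j := by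
  have hab : (p.castSucc : Fin (k+1)) ≠ p.succ := (Fin.castSucc_lt_succ (i := p)).ne
  rcases eq_or_ne i p.castSucc with rfl | hia
  · rw [Equiv.swap_apply_left]
    -- j > a, j ≠ b so j > b
    rw [Fin.lt_def] at hij ⊢
    rw [Fin.coe_castSucc] at hij
    rw [Fin.val_succ]
    have : (j : ℕ) ≠ (p : ℕ) + 1 := fun h => hjb (Fin.ext (by rw [Fin.val_succ]; exact h))
    omega
  · rcases eq_or_ne i p.succ with rfl | hib
    · rw [Equiv.swap_apply_right]
      exact lt_trans (Fin.castSucc_lt_succ (i := p)) hij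
    · rw [Equiv.swap_apply_of_ne_of_ne hia hib]; exact hij

/-- The code is unchanged away from the two swapped positions. -/
lemma pcode_mul_swap_ne (σ : Equiv.Perm (Fin (k + 1))) (p : Fin k) (j : Fin (k + 1))
    (hja : j ≠ p.castSucc) (hjb : j ≠ p.succ) :
    pcode (σ * Equiv.swap p.castSucc p.succ) j = pcode σ j := by
  set s := Equiv.swap p.castSucc p.succ with hs
  have hsj : s j = j := Equiv.swap_apply_of_ne_of_ne hja hjb
  unfold pcode
  congr 1
  refine Finset.card_nbij' (fun i => s i) (fun i => s i) ?_ ?_ ?_ ?_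
  · intro i hi
    simp only [Finset.mem_coe, Finset.mem_filter, Finset.mem_univ, true_and] at hi ⊢
    refine ⟨swap_lt_of_lt hja hjb hi.1, ?_⟩
    have : (σ * s) i = σ (s i) := rfl
    have hj : (σ * s) j = σ j := by rw [Equiv.Perm.mul_apply, hsj]
    rw [this, hj] at hi
    exact hi.2
  · intro i hi
    simp only [Finset.mem_coe, Finset.mem_filter, Finset.mem_univ, true_and] at hi ⊢
    refine ⟨swap_lt_of_lt hja hjb hi.1, ?_⟩
    have hj : (σ * s) j = σ j := by rw [Equiv.Perm.mul_apply, hsj]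
    rw [Equiv.Perm.mul_apply, hs, Equiv.swap_apply_self, hj]
    exact hi.2
  · intro i _; simp [hs, Equiv.swap_apply_self]
  · intro i _; simp [hs, Equiv.swap_apply_self]

/-- The code at position `p` after the swap. -/
lemma pcode_mul_swap_castSucc (σ : Equiv.Perm (Fin (k + 1))) (p : Fin k) :
    pcode (σ * Equiv.swap p.castSucc p.succ) p.castSucc =
      1 + (Finset.univ.filter fun i => i < p.castSucc ∧ σ i < σ p.succ).card := by
  unfold pcode
  congr 2
  ext i
  simp only [Finset.mem_filter, Finset.mem_univ, true_and]
  constructor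
  · rintro ⟨hlt, hv⟩
    refine ⟨hlt, ?_⟩
    have hia : i ≠ p.castSucc := hlt.ne
    have hib : i ≠ p.succ := (lt_trans hlt (Fin.castSucc_lt_succ (i := p))).ne
    rw [Equiv.Perm.mul_apply, Equiv.Perm.mul_apply, Equiv.swap_apply_of_ne_of_ne hia hib,
      Equiv.swap_apply_left] at hv
    exact hv
  · rintro ⟨hlt, hv⟩
    refine ⟨hlt, ?_⟩
    have hia : i ≠ p.castSucc := hlt.ne
    have hib : i ≠ p.succ := (lt_trans hlt (Fin.castSucc_lt_succ (i := p))).ne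
    rw [Equiv.Perm.mul_apply, Equiv.Perm.mul_apply, Equiv.swap_apply_of_ne_of_ne hia hib,
      Equiv.swap_apply_left]
    exact hv

/-- The code at position `p+1` after the swap. -/
lemma pcode_mul_swap_succ (σ : Equiv.Perm (Fin (k + 1))) (p : Fin k) :
    pcode (σ * Equiv.swap p.castSucc p.succ) p.succ =
      1 + ((Finset.univ.filter fun i => i < p.castSucc ∧ σ i < σ p.castSucc).card +
        if σ p.succ < σ p.castSucc then 1 else 0) := by
  unfold pcode
  congr 1
  rw [card_filter_lt_succ (fun i => (σ * Equiv.swap p.castSucc p.succ) i <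
    (σ * Equiv.swap p.castSucc p.succ) p.succ) p]
  have hb : (σ * Equiv.swap p.castSucc p.succ) p.succ = σ p.castSucc := by
    rw [Equiv.Perm.mul_apply, Equiv.swap_apply_right]
  have ha : (σ * Equiv.swap p.castSucc p.succ) p.castSucc = σ p.succ := by
    rw [Equiv.Perm.mul_apply, Equiv.swap_apply_left]
  congr 1
  · apply Finset.card_nbij' id id <;> intro i hi <;>
      simp only [Finset.mem_coe, Finset.mem_filter, Finset.mem_univ, true_and, id] at hi ⊢
    · refine ⟨hi.1, ?_⟩
      have hia : i ≠ p.castSucc := hi.1.ne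
      have hib : i ≠ p.succ := (lt_trans hi.1 (Fin.castSucc_lt_succ (i := p))).ne
      rw [Equiv.Perm.mul_apply, Equiv.swap_apply_of_ne_of_ne hia hib, hb] at hi
      exact hi.2
    · refine ⟨hi.1, ?_⟩
      have hia : i ≠ p.castSucc := hi.1.ne
      have hib : i ≠ p.succ := (lt_trans hi.1 (Fin.castSucc_lt_succ (i := p))).ne
      rw [Equiv.Perm.mul_apply, Equiv.swap_apply_of_ne_of_ne hia hib, hb]
      exact hi.2
  · rw [ha, hb]

/-- The code at position `p+1` (no swap), split. -/
lemma pcode_succ (σ : Equiv.Perm (Fin (k + 1))) (p : Fin k) :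
    pcode σ p.succ =
      1 + ((Finset.univ.filter fun i => i < p.castSucc ∧ σ i < σ p.succ).card +
        if σ p.castSucc < σ p.succ then 1 else 0) := by
  unfold pcode
  rw [card_filter_lt_succ (fun i => σ i < σ p.succ) p]



/-- The out-vertex `(1, 2, …, k+1)` of `G_{1,k}`. -/
def outVertex (k : ℕ) : GskVertex 1 k :=
  ⟨fun j => (j : ℕ) + 1, fun j => by show (j : ℕ) + 1 ≤ 1 + (j : ℕ); omega⟩

/-- The Cayley graph of the symmetric group `S_{k+1}` with respect to the adjacent
transpositions: `σ` and `σ·(i, i+1)` are joined by an edge. -/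
def CayleyAdj (k : ℕ) : SimpleGraph (Equiv.Perm (Fin (k + 1))) :=
  SimpleGraph.fromRel (fun σ τ => ∃ i : Fin k, τ = σ * Equiv.swap i.castSucc i.succ)

def Psi (k : ℕ) (σ : Equiv.Perm (Fin (k + 1))) : GskVertex 1 k :=
  ⟨pcode σ, fun j => by have := pcode_le σ j; omega⟩

lemma filter_mono_aux (σ : Equiv.Perm (Fin (k + 1))) (p : Fin k)
    (h : σ p.castSucc < σ p.succ) :
    (Finset.univ.filter fun i => i < p.castSucc ∧ σ i < σ p.castSucc).card ≤
      (Finset.univ.filter fun i => i < p.castSucc ∧ σ i < σ p.succ).card := by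
  apply Finset.card_le_card
  intro i hi
  simp only [Finset.mem_filter, Finset.mem_univ, true_and] at hi ⊢
  exact ⟨hi.1, lt_trans hi.2 h⟩

/-- Main step lemma, case `σ p < σ (p+1)`. -/
lemma stepA (σ : Equiv.Perm (Fin (k + 1))) (p : Fin k)
    (h : σ p.castSucc < σ p.succ) :
    pcode σ p.castSucc < pcode σ p.succ ∧
    pcode (σ * Equiv.swap p.castSucc p.succ) p.castSucc = pcode σ p.succ - 1 ∧
    pcode (σ * Equiv.swap p.castSucc p.succ) p.succ = pcode σ p.castSucc ∧
    (∀ q : Fin (k + 1), q ≠ p.castSucc → q ≠ p.succ →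
      pcode (σ * Equiv.swap p.castSucc p.succ) q = pcode σ q) ∧
    pcode (σ * Equiv.swap p.castSucc p.succ) p.succ < pcode σ p.succ := by
  have hm := filter_mono_aux σ p h
  have h1 := pcode_mul_swap_castSucc σ p
  have h2 := pcode_mul_swap_succ σ p
  have h3 := pcode_succ σ p
  have h4 : pcode σ p.castSucc =
      1 + (Finset.univ.filter fun i => i < p.castSucc ∧ σ i < σ p.castSucc).card := rfl
  rw [if_pos h] at h3
  rw [if_neg (asymm h)] at h2
  refine ⟨by omega, by omega, by omega, pcode_mul_swap_ne σ p, by omega⟩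

lemma pcode_one (j : Fin (k + 1)) : pcode (1 : Equiv.Perm (Fin (k + 1))) j = (j : ℕ) + 1 := by
  unfold pcode
  have : (Finset.univ.filter fun i => i < j ∧ (1 : Equiv.Perm (Fin (k+1))) i <
      (1 : Equiv.Perm (Fin (k+1))) j) = Finset.Iio j := by
    ext i; simp [Equiv.Perm.one_apply]
  rw [this, Fin.card_Iio]
  omega

lemma card_filter_apply_lt (σ : Equiv.Perm (Fin (k + 1))) (j : Fin (k + 1)) :
    (Finset.univ.filter fun i => σ i < σ j).card = (σ j : ℕ) := by
  rw [← Fin.card_Iio (σ j)]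
  apply Finset.card_nbij' (fun i => σ i) (fun y => σ.symm y)
  · intro i hi; simp only [Finset.mem_coe, Finset.mem_filter, Finset.mem_univ, true_and,
      Finset.mem_Iio] at hi ⊢; exact hi
  · intro y hy; simp only [Finset.mem_coe, Finset.mem_filter, Finset.mem_univ, true_and,
      Finset.mem_Iio, Equiv.apply_symm_apply] at hy ⊢; exact hy
  · intro i _; simp
  · intro y _; simp

lemma pcode_split (σ : Equiv.Perm (Fin (k + 1))) (j : Fin (k + 1)) :
    (Finset.univ.filter fun i => i < j ∧ σ i < σ j).card +
      (Finset.univ.filter fun i => j < i ∧ σ i < σ j).card = (σ j : ℕ) := by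
  rw [← card_filter_apply_lt σ j, ← Finset.card_union_of_disjoint]
  · congr 1
    ext i
    simp only [Finset.mem_union, Finset.mem_filter, Finset.mem_univ, true_and]
    constructor
    · rintro (⟨h1, h2⟩ | ⟨h1, h2⟩) <;> exact h2
    · intro h
      have hij : i ≠ j := fun he => absurd h (by rw [he]; exact lt_irrefl _)
      rcases lt_or_gt_of_ne hij with h' | h'
      · exact Or.inl ⟨h', h⟩
      · exact Or.inr ⟨h', h⟩
  · rw [Finset.disjoint_filter]
    rintro i _ ⟨h1, -⟩ ⟨h2, -⟩
    exact absurd (lt_trans h1 h2) (lt_irrefl _)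

lemma pcode_key_aux (σ τ : Equiv.Perm (Fin (k + 1))) (j : Fin (k + 1))
    (hgt : ∀ i, j < i → σ i = τ i) (hc : pcode σ j = pcode τ j) : ¬ σ j < τ j := by
  intro hlt
  have hA : ∀ x : Fin (k + 1), (Finset.univ.filter fun i => j < i ∧ τ i < x) =
      (Finset.univ.filter fun i => j < i ∧ σ i < x) := by
    intro x
    apply Finset.filter_congr
    intro i _
    constructor
    · rintro ⟨h1, h2⟩; rw [hgt i h1]; exact ⟨h1, h2⟩
    · rintro ⟨h1, h2⟩; rw [← hgt i h1]; exact ⟨h1, h2⟩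
  have hsplitσ := pcode_split σ j
  have hsplitτ := pcode_split τ j
  have hcc : (Finset.univ.filter fun i => i < j ∧ σ i < σ j).card =
      (Finset.univ.filter fun i => i < j ∧ τ i < τ j).card := by
    have := hc
    unfold pcode at this
    omega
  rw [hA (τ j)] at hsplitτ
  -- decompose {i > j : σ i < τ j}
  have hdec : (Finset.univ.filter fun i => j < i ∧ σ i < τ j) =
      (Finset.univ.filter fun i => j < i ∧ σ i < σ j) ∪
        (Finset.univ.filter fun i => j < i ∧ σ j < σ i ∧ σ i < τ j) := by
    ext i
    simp only [Finset.mem_union, Finset.mem_filter, Finset.mem_univ, true_and]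
    constructor
    · rintro ⟨h1, h2⟩
      have hne : σ i ≠ σ j := fun he => absurd (σ.injective he) (fun hh => by
        subst hh; exact absurd h1 (lt_irrefl _))
      rcases lt_or_gt_of_ne hne with h' | h'
      · exact Or.inl ⟨h1, h'⟩
      · exact Or.inr ⟨h1, h', h2⟩
    · rintro (⟨h1, h2⟩ | ⟨h1, h2, h3⟩)
      · exact ⟨h1, lt_trans h2 hlt⟩
      · exact ⟨h1, h3⟩
  have hdisj : Disjoint (Finset.univ.filter fun i => j < i ∧ σ i < σ j)
      (Finset.univ.filter fun i => j < i ∧ σ j < σ i ∧ σ i < τ j) := by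
    rw [Finset.disjoint_filter]
    rintro i _ ⟨-, h2⟩ ⟨-, h3, -⟩
    exact absurd (lt_trans h2 h3) (lt_irrefl _)
  have hbound : (Finset.univ.filter fun i => j < i ∧ σ j < σ i ∧ σ i < τ j).card ≤
      (τ j : ℕ) - (σ j : ℕ) - 1 := by
    have := Finset.card_le_card_of_injOn (fun i => (σ i : ℕ))
      (s := Finset.univ.filter fun i => j < i ∧ σ j < σ i ∧ σ i < τ j)
      (t := Finset.Ioo (σ j : ℕ) (τ j : ℕ))
      (fun i hi => by
        simp only [Finset.mem_coe, Finset.mem_filter, Finset.mem_univ, true_and] at hi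
        simp only [Finset.mem_coe, Finset.mem_Ioo]
        exact ⟨hi.2.1, hi.2.2⟩)
      (fun i _ i' _ he => σ.injective (Fin.ext he))
    rwa [Nat.card_Ioo] at this
  rw [hdec, Finset.card_union_of_disjoint hdisj] at hsplitτ
  have hlt' : (σ j : ℕ) < (τ j : ℕ) := hlt
  omega

lemma pcode_injective (σ τ : Equiv.Perm (Fin (k + 1))) (h : pcode σ = pcode τ) : σ = τ := by
  have key : ∀ j : Fin (k + 1), (∀ i, j < i → σ i = τ i) → σ j = τ j := by
    intro j hgt
    rcases lt_trichotomy (σ j) (τ j) with h' | h' | h'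
    · exact absurd h' (pcode_key_aux σ τ j hgt (congrFun h j))
    · exact h'
    · exact absurd h' (pcode_key_aux τ σ j (fun i hi => (hgt i hi).symm)
        (congrFun h.symm j))
  have all : ∀ m : ℕ, ∀ j : Fin (k + 1), k ≤ (j : ℕ) + m → σ j = τ j := by
    intro m
    induction m with
    | zero =>
      intro j hj
      apply key
      intro i hi
      exact absurd (lt_of_le_of_lt (Nat.le_of_lt_succ i.isLt)
        (lt_of_le_of_lt (by omega : k ≤ (j : ℕ)) hi)) (lt_irrefl _)
    | succ m ih =>
      intro j hj
      apply key
      intro i hi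
      exact ih i (by have := (Fin.lt_def.mp hi); omega)
  apply Equiv.ext
  intro j
  exact all k j (by omega)

lemma pcode_pos (σ : Equiv.Perm (Fin (k + 1))) (j : Fin (k + 1)) : 1 ≤ pcode σ j :=
  Nat.le_add_right 1 _

lemma pcode_anti (σ : Equiv.Perm (Fin (k + 1))) (p : Fin k)
    (h : σ p.succ < σ p.castSucc) : pcode σ p.succ ≤ pcode σ p.castSucc := by
  have h3 := pcode_succ σ p
  rw [if_neg (asymm h)] at h3
  have h4 : pcode σ p.castSucc =
      1 + (Finset.univ.filter fun i => i < p.castSucc ∧ σ i < σ p.castSucc).card := rfl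
  have hm : (Finset.univ.filter fun i => i < p.castSucc ∧ σ i < σ p.succ).card ≤
      (Finset.univ.filter fun i => i < p.castSucc ∧ σ i < σ p.castSucc).card := by
    apply Finset.card_le_card
    intro i hi
    simp only [Finset.mem_filter, Finset.mem_univ, true_and] at hi ⊢
    exact ⟨hi.1, lt_trans hi.2 h⟩
  omega

lemma sigma_ne (σ : Equiv.Perm (Fin (k + 1))) (p : Fin k) : σ p.castSucc ≠ σ p.succ :=
  fun h => absurd (σ.injective h) (Fin.castSucc_lt_succ (i := p)).ne

lemma mul_swap_swap (σ : Equiv.Perm (Fin (k + 1))) (p : Fin k) :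
    (σ * Equiv.swap p.castSucc p.succ) * Equiv.swap p.castSucc p.succ = σ := by
  rw [mul_assoc, Equiv.swap_mul_self, mul_one]

lemma adj_psi (σ : Equiv.Perm (Fin (k + 1))) (p : Fin k) :
    (Gsk 1 k).Adj (Psi k σ) (Psi k (σ * Equiv.swap p.castSucc p.succ)) := by
  rw [Gsk, SimpleGraph.fromRel_adj]
  rcases lt_or_gt_of_ne (sigma_ne σ p) with h | h
  · obtain ⟨h1, h2, h3, h4, h5⟩ := stepA σ p h
    refine ⟨fun he => ?_, Or.inl ⟨p, h1, h2, h3, h4⟩⟩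
    have := congrFun (congrArg Subtype.val he) p.succ
    simp only [Psi] at this
    omega
  · set τ := σ * Equiv.swap p.castSucc p.succ with hτ
    have hτa : τ p.castSucc = σ p.succ := by
      rw [hτ, Equiv.Perm.mul_apply, Equiv.swap_apply_left]
    have hτb : τ p.succ = σ p.castSucc := by
      rw [hτ, Equiv.Perm.mul_apply, Equiv.swap_apply_right]
    have hττ : τ * Equiv.swap p.castSucc p.succ = σ := mul_swap_swap σ p
    have hlt : τ p.castSucc < τ p.succ := by rw [hτa, hτb]; exact h
    obtain ⟨h1, h2, h3, h4, h5⟩ := stepA τ p hlt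
    rw [hττ] at h2 h3 h4 h5
    refine ⟨fun he => ?_, Or.inr ⟨p, h1, h2, h3, h4⟩⟩
    have := congrFun (congrArg Subtype.val he) p.succ
    simp only [Psi] at this
    omega

lemma adj_psi_inv (σ : Equiv.Perm (Fin (k + 1))) (w : GskVertex 1 k)
    (h : (Gsk 1 k).Adj (Psi k σ) w) :
    ∃ p : Fin k, w = Psi k (σ * Equiv.swap p.castSucc p.succ) := by
  rw [Gsk, SimpleGraph.fromRel_adj] at h
  obtain ⟨hne, hc | hc⟩ := h
  · obtain ⟨p, h1, h2, h3, h4⟩ := hc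
    simp only [Psi] at h1 h2 h3 h4
    refine ⟨p, ?_⟩
    have hab : σ p.castSucc < σ p.succ := by
      rcases lt_or_gt_of_ne (sigma_ne σ p) with h' | h'
      · exact h'
      · exact absurd h1 (not_lt_of_ge (pcode_anti σ p h'))
    obtain ⟨g1, g2, g3, g4, g5⟩ := stepA σ p hab
    apply Subtype.ext
    funext q
    show w.1 q = pcode (σ * Equiv.swap p.castSucc p.succ) q
    rcases eq_or_ne q p.castSucc with rfl | hqa
    · rw [g2, h2]
    rcases eq_or_ne q p.succ with rfl | hqb
    · rw [g3, h3]
    · rw [g4 q hqa hqb, h4 q hqa hqb]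
  · obtain ⟨p, h1, h2, h3, h4⟩ := hc
    simp only [Psi] at h1 h2 h3 h4
    refine ⟨p, ?_⟩
    set τ := σ * Equiv.swap p.castSucc p.succ with hτ
    have hτa : τ p.castSucc = σ p.succ := by
      rw [hτ, Equiv.Perm.mul_apply, Equiv.swap_apply_left]
    have hτb : τ p.succ = σ p.castSucc := by
      rw [hτ, Equiv.Perm.mul_apply, Equiv.swap_apply_right]
    have hττ : τ * Equiv.swap p.castSucc p.succ = σ := mul_swap_swap σ p
    have hab : σ p.succ < σ p.castSucc := by
      rcases lt_or_gt_of_ne (sigma_ne σ p) with h' | h'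
      · exfalso
        obtain ⟨g1, -, -, -, -⟩ := stepA σ p h'
        -- pcode σ a < pcode σ b, but pcode σ b = w a < w b = pcode σ a + 1
        have hwb : w.1 p.succ = pcode σ p.castSucc + 1 := by omega
        omega
      · exact h'
    have hlt : τ p.castSucc < τ p.succ := by rw [hτa, hτb]; exact hab
    obtain ⟨g1, g2, g3, g4, g5⟩ := stepA τ p hlt
    rw [hττ] at g2 g3 g4 g5
    have hpos := pcode_pos τ p.succ
    apply Subtype.ext
    funext q
    show w.1 q = pcode τ q
    rcases eq_or_ne q p.castSucc with rfl | hqa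
    · rw [← h3, g3]
    rcases eq_or_ne q p.succ with rfl | hqb
    · omega
    · rw [← h4 q hqa hqb, g4 q hqa hqb]

lemma out_eq_psi_one : outVertex k = Psi k 1 := by
  apply Subtype.ext
  funext j
  show (j : ℕ) + 1 = pcode 1 j
  rw [pcode_one]

lemma reach_psi (σ : Equiv.Perm (Fin (k + 1))) :
    (Gsk 1 k).Reachable (outVertex k) (Psi k σ) := by
  have hσ : σ ∈ Submonoid.closure
      (Set.range fun i : Fin k => Equiv.swap i.castSucc i.succ) := by
    rw [Equiv.Perm.mclosure_swap_castSucc_succ]; trivial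
  obtain ⟨l, hl, rfl⟩ := Submonoid.exists_list_of_mem_closure hσ
  clear hσ
  induction l using List.reverseRecOn with
  | nil =>
    rw [List.prod_nil, ← out_eq_psi_one]
  | append_singleton l s ih =>
    rw [List.prod_append, List.prod_cons, List.prod_nil, mul_one]
    obtain ⟨p, hp⟩ := hl s (by simp)
    have h1 : (Gsk 1 k).Reachable (outVertex k) (Psi k l.prod) :=
      ih (fun y hy => hl y (by simp [hy]))
    exact h1.trans (by rw [← hp]; exact (adj_psi l.prod p).reachable)

lemma psi_surj (v : GskVertex 1 k) (h : (Gsk 1 k).Reachable (outVertex k) v) :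
    ∃ σ, v = Psi k σ := by
  obtain ⟨w⟩ := h
  rw [out_eq_psi_one] at w
  have key : ∀ (u x : GskVertex 1 k), (Gsk 1 k).Walk u x → (∃ σ, u = Psi k σ) →
      ∃ τ, x = Psi k τ := by
    intro u x wk
    induction wk with
    | nil => exact id
    | cons ha q ih =>
      rintro ⟨σ, rfl⟩
      obtain ⟨p, hp⟩ := adj_psi_inv σ _ ha
      exact ih ⟨_, hp⟩
  exact key _ _ w ⟨1, rfl⟩

lemma adj_iff (σ τ : Equiv.Perm (Fin (k + 1))) :
    (Gsk 1 k).Adj (Psi k σ) (Psi k τ) ↔ (CayleyAdj k).Adj σ τ := by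
  constructor
  · intro h
    obtain ⟨p, hp⟩ := adj_psi_inv σ _ h
    have hτ : τ = σ * Equiv.swap p.castSucc p.succ := by
      apply pcode_injective
      exact congrArg Subtype.val hp
    have hne : σ ≠ τ := by
      rintro rfl
      exact absurd rfl h.ne
    rw [CayleyAdj, SimpleGraph.fromRel_adj]
    exact ⟨hne, Or.inl ⟨p, hτ⟩⟩
  · intro h
    rw [CayleyAdj, SimpleGraph.fromRel_adj] at h
    obtain ⟨hne, ⟨p, hp⟩ | ⟨p, hp⟩⟩ := h
    · rw [hp]; exact adj_psi σ p
    · rw [hp]; exact (adj_psi τ p).symm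


/-- The connected component of the out-vertex `(1, 2, …, k+1)` in `G_{1,k}` (as an induced
subgraph) is isomorphic to the Cayley graph of `S_{k+1}` with respect to the adjacent
transpositions. -/
theorem stmt7 (k : ℕ) (hk : 1 ≤ k) :
    Nonempty
      (((Gsk 1 k).induce {v : GskVertex 1 k | (Gsk 1 k).Reachable (outVertex k) v}) ≃g
        CayleyAdj k) := by
  have hinj : Function.Injective (fun σ : Equiv.Perm (Fin (k + 1)) =>
      (⟨Psi k σ, reach_psi σ⟩ : {v : GskVertex 1 k //
        v ∈ {v : GskVertex 1 k | (Gsk 1 k).Reachable (outVertex k) v}})) := by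
    intro σ τ h
    apply pcode_injective
    have := congrArg (fun x => x.1.1) h
    exact this
  have hsurj : Function.Surjective (fun σ : Equiv.Perm (Fin (k + 1)) =>
      (⟨Psi k σ, reach_psi σ⟩ : {v : GskVertex 1 k //
        v ∈ {v : GskVertex 1 k | (Gsk 1 k).Reachable (outVertex k) v}})) := by
    rintro ⟨v, hv⟩
    obtain ⟨σ, rfl⟩ := psi_surj v hv
    exact ⟨σ, rfl⟩
  let e := Equiv.ofBijective _ ⟨hinj, hsurj⟩
  refine ⟨RelIso.symm ⟨e, ?_⟩⟩
  intro σ τ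
  show ((Gsk 1 k).induce _).Adj ⟨Psi k σ, _⟩ ⟨Psi k τ, _⟩ ↔ (CayleyAdj k).Adj σ τ
  rw [← adj_iff σ τ]
  rfl
end

section
/- In the graph G_{s,k}, if a vertex v = (i_0,...,i_k) is reached from an out-vertex (i_0^{out} < ··· < i_k^{out}) by a directed path, and for some pair of original positions p < q the entry originating at position p remains to the left of the entry originating at position q, then the current values satisfy i'_q - i'_p ≥ 1; consequently, v is an in-vertex if and only if, for every pair p < q, the entry originating at position p has been moved to the right of the entry originating at position q. -/
/-- Number of entries with smaller original position currently located strictly to the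
right of the entry originating at `q`. -/
def stmt19Inv {n : ℕ} (σ : Equiv.Perm (Fin n)) (q : Fin n) : ℕ :=
  (Finset.univ.filter fun x => x < q ∧ σ.symm q < σ.symm x).card

/-- Tracking the entries of an out-vertex of `G_{s,k}` along a directed path: states are
pairs of a placement permutation `π t` (sending each slot to the original position of the
entry currently occupying it) and a value function `val t` (the current value of each
tracked entry).  A directed edge at slot `p` requires the value at slot `p` to be less
than the value at slot `p+1`, swaps the two entries, and decrements by one the value of
the entry that moves left.  Then: (1) if the entry originating at position `p` is still to
the left of the one originating at position `q > p`, their current values satisfy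
`i'_q - i'_p ≥ 1`; consequently (2) the current tuple is an in-vertex (weakly decreasing)
iff for every pair `p < q` the entry from `p` has been moved to the right of the entry
from `q`. -/
theorem stmt19 (s k : ℕ) (hs : 1 ≤ s) (hk : 1 ≤ k) (m : ℕ)
    (π : ℕ → Equiv.Perm (Fin (k + 1))) (val : ℕ → Fin (k + 1) → ℕ)
    (i0 : Fin (k + 1) → ℕ) (hi0 : StrictMono i0)
    (hbd : ∀ j : Fin (k + 1), i0 j ≤ s + (j : ℕ))
    (hπ0 : π 0 = 1) (hval0 : val 0 = i0)
    (hstep : ∀ t < m, ∃ p : Fin k,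
      val t (π t p.castSucc) < val t (π t p.succ) ∧
      π (t + 1) = π t * Equiv.swap p.castSucc p.succ ∧
      val (t + 1) = Function.update (val t) (π t p.succ) (val t (π t p.succ) - 1)) :
    (∀ p q : Fin (k + 1), p < q → (π m).symm p < (π m).symm q → val m p < val m q) ∧
    ((∀ r : Fin k, val m (π m r.succ) ≤ val m (π m r.castSucc)) ↔
      ∀ p q : Fin (k + 1), p < q → (π m).symm q < (π m).symm p) := by
  -- strict monotonicity quantitatively
  have M : ∀ p q : Fin (k + 1), p ≤ q → i0 p + (q.val - p.val) ≤ i0 q := by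
    have aux : ∀ d, ∀ p q : Fin (k + 1), p.val + d = q.val → i0 p + d ≤ i0 q := by
      intro d
      induction d with
      | zero =>
        intro p q h
        have : p = q := Fin.ext (by omega)
        simp [this]
      | succ n ih =>
        intro p q h
        have hq : 0 < q.val := by omega
        have hq1 : q.val - 1 < k + 1 := by omega
        have h1 : i0 p + n ≤ i0 ⟨q.val - 1, hq1⟩ := ih p ⟨q.val - 1, hq1⟩ (by simp; omega)
        have h2 : i0 ⟨q.val - 1, hq1⟩ < i0 q := hi0 (Fin.lt_def.mpr (by show q.val - 1 < q.val; omega))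
        omega
    intro p q hpq
    exact aux _ p q (by have := Fin.le_def.mp hpq; omega)
  -- the key invariant
  have key : ∀ t ≤ m, ∀ q, val t q + stmt19Inv (π t) q = i0 q := by
    intro t
    induction t with
    | zero =>
      intro _ q
      have : stmt19Inv (π 0) q = 0 := by
        rw [hπ0]
        unfold stmt19Inv
        rw [Finset.card_eq_zero, Finset.filter_eq_empty_iff]
        intro x _
        simp only [Equiv.Perm.one_symm, Equiv.Perm.coe_one, id_eq]
        rintro ⟨h1, h2⟩
        exact absurd (h1.trans h2) (lt_irrefl x)
      rw [hval0, this]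
      omega
    | succ t ih =>
      intro ht q
      have ihm := ih (by omega)
      obtain ⟨r, hlt, hπs, hvals⟩ := hstep t (by omega)
      set σ := π t with hσ
      set c := r.castSucc with hc
      set a := σ c with ha
      set b := σ r.succ with hb
      have hcs : c < r.succ := Fin.castSucc_lt_succ
      have hcval : c.val = r.val := rfl
      have hsval : (r.succ : Fin (k+1)).val = r.val + 1 := rfl
      -- symm of new permutation
      have hg' : ∀ x, (π (t+1)).symm x = Equiv.swap c (r.succ) (σ.symm x) := by
        intro x; rw [hπs]; simp [Equiv.Perm.mul_def]
      have hsa : σ.symm a = c := Equiv.symm_apply_apply σ c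
      have hsb : σ.symm b = r.succ := Equiv.symm_apply_apply σ r.succ
      have hxa : ∀ x : Fin (k+1), σ.symm x = c ↔ x = a := by
        intro x; rw [Equiv.symm_apply_eq]
      have hxb : ∀ x : Fin (k+1), σ.symm x = r.succ ↔ x = b := by
        intro x; rw [Equiv.symm_apply_eq]
      have hab_ne : a ≠ b := fun h => absurd (σ.injective h) (ne_of_lt hcs)
      -- comparison helper
      have hcomp : ∀ w : Fin (k+1), w ≠ c → w ≠ r.succ →
          ((c < w ↔ r.succ < w) ∧ (w < c ↔ w < r.succ)) := by
        intro w h1 h2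
        have v1 : w.val ≠ c.val := Fin.val_ne_of_ne h1
        have v2 : w.val ≠ (r.succ : Fin (k+1)).val := Fin.val_ne_of_ne h2
        rw [hcval] at v1
        rw [hsval] at v2
        constructor <;> constructor <;> intro h <;>
          · rw [Fin.lt_def] at h ⊢
            omega
      -- a < b
      have hab : a < b := by
        rcases lt_trichotomy a b with h | h | h
        · exact h
        · exact absurd h hab_ne
        · exfalso
          -- subset argument : inv a ≤ inv b + (a - b)
          have hsub : (Finset.univ.filter fun x => x < a ∧ σ.symm a < σ.symm x) ⊆
              (Finset.univ.filter fun x => x < b ∧ σ.symm b < σ.symm x) ∪ Finset.Ico b a := by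
            intro x hx
            simp only [Finset.mem_filter, Finset.mem_univ, true_and, hsa] at hx
            obtain ⟨hx1, hx2⟩ := hx
            rcases lt_or_ge x b with hxb' | hxb'
            · have hne2 : σ.symm x ≠ r.succ :=
                fun h' => absurd ((hxb x).mp h') (ne_of_lt hxb')
              have hne1 : σ.symm x ≠ c := ne_of_gt hx2
              have : r.succ < σ.symm x := ((hcomp _ hne1 hne2).1).mp hx2
              simp only [Finset.mem_union, Finset.mem_filter, Finset.mem_univ, true_and, hsb]
              exact Or.inl ⟨hxb', this⟩
            · simp only [Finset.mem_union, Finset.mem_Ico]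
              exact Or.inr ⟨hxb', hx1⟩
          have hcard := Finset.card_le_card hsub
          have hcard2 := Finset.card_union_le
            (Finset.univ.filter fun x => x < b ∧ σ.symm b < σ.symm x) (Finset.Ico b a)
          rw [Fin.card_Ico] at hcard2
          have hia := ihm a
          have hib := ihm b
          have hM := M b a (le_of_lt h)
          have hbvala : b.val < a.val := h
          unfold stmt19Inv at hia hib
          omega
      -- now prove the invariant for each q
      have ha_ne_q_or : True := trivial
      by_cases hqb : q = b
      · -- q = b : value decreases by 1, inversion count increases by 1
        subst hqb
        have hvb : val (t+1) b = val t b - 1 := by rw [hvals]; simp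
        have hset : (Finset.univ.filter fun x => x < b ∧ (π (t+1)).symm b < (π (t+1)).symm x)
            = insert a (Finset.univ.filter fun x => x < b ∧ σ.symm b < σ.symm x) := by
          ext x
          simp only [Finset.mem_filter, Finset.mem_univ, true_and, Finset.mem_insert, hg', hsb]
          rw [Equiv.swap_apply_right]
          by_cases hxa' : x = a
          · subst hxa'
            simp only [hsa, Equiv.swap_apply_left]
            simp [hab, hcs]
          · by_cases hxb' : x = b
            · subst hxb'
              simp [lt_irrefl, hab_ne.symm]
            · have hne1 : σ.symm x ≠ c := fun h' => hxa' ((hxa x).mp h')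
              have hne2 : σ.symm x ≠ r.succ := fun h' => hxb' ((hxb x).mp h')
              rw [Equiv.swap_apply_of_ne_of_ne hne1 hne2]
              have := (hcomp _ hne1 hne2).1
              constructor
              · rintro ⟨h1, h2⟩; exact Or.inr ⟨h1, this.mp h2⟩
              · rintro (h' | ⟨h1, h2⟩)
                · exact absurd h' hxa'
                · exact ⟨h1, this.mpr h2⟩
        have hnotmem : a ∉ (Finset.univ.filter fun x => x < b ∧ σ.symm b < σ.symm x) := by
          simp only [Finset.mem_filter, Finset.mem_univ, true_and, hsa, hsb]
          rintro ⟨-, h'⟩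
          exact absurd (hcs.trans h') (lt_irrefl _)
        have hib := ihm b
        unfold stmt19Inv at hib ⊢
        rw [hset, Finset.card_insert_of_notMem hnotmem, hvb]
        omega
      · -- q ≠ b : value unchanged, inversion count unchanged
        have hvq : val (t+1) q = val t q := by
          rw [hvals]; exact Function.update_of_ne hqb _ _
        have hqne2 : σ.symm q ≠ r.succ := fun h' => hqb ((hxb q).mp h')
        have hset : (Finset.univ.filter fun x => x < q ∧ (π (t+1)).symm q < (π (t+1)).symm x)
            = (Finset.univ.filter fun x => x < q ∧ σ.symm q < σ.symm x) := by
          ext x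
          simp only [Finset.mem_filter, Finset.mem_univ, true_and, hg']
          by_cases hqa : q = a
          · -- symm q = c, swapped to r.succ
            subst hqa
            rw [hsa, Equiv.swap_apply_left]
            constructor
            · rintro ⟨h1, h2⟩
              refine ⟨h1, ?_⟩
              have hxa' : x ≠ a := ne_of_lt h1
              have hxb' : x ≠ b := fun h' => absurd (h' ▸ h1) (not_lt.mpr (le_of_lt hab))
              have hne1 : σ.symm x ≠ c := fun h' => hxa' ((hxa x).mp h')
              have hne2 : σ.symm x ≠ r.succ := fun h' => hxb' ((hxb x).mp h')
              rw [Equiv.swap_apply_of_ne_of_ne hne1 hne2] at h2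
              exact ((hcomp _ hne1 hne2).1).mpr h2
            · rintro ⟨h1, h2⟩
              refine ⟨h1, ?_⟩
              have hxa' : x ≠ a := ne_of_lt h1
              have hxb' : x ≠ b := fun h' => absurd (h' ▸ h1) (not_lt.mpr (le_of_lt hab))
              have hne1 : σ.symm x ≠ c := fun h' => hxa' ((hxa x).mp h')
              have hne2 : σ.symm x ≠ r.succ := fun h' => hxb' ((hxb x).mp h')
              rw [Equiv.swap_apply_of_ne_of_ne hne1 hne2]
              exact ((hcomp _ hne1 hne2).1).mp h2
          · have hqne1 : σ.symm q ≠ c := fun h' => hqa ((hxa q).mp h')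
            rw [Equiv.swap_apply_of_ne_of_ne hqne1 hqne2]
            by_cases hxa' : x = a
            · subst hxa'
              rw [hsa, Equiv.swap_apply_left]
              have := (hcomp _ hqne1 hqne2).1
              constructor
              · rintro ⟨h1, h2⟩
                refine ⟨h1, ?_⟩
                -- σ.symm q < r.succ, σ.symm q ≠ c, r.succ : want σ.symm q < c
                rw [Fin.lt_def] at h2 ⊢
                have v1 : (σ.symm q).val ≠ c.val := Fin.val_ne_of_ne hqne1
                have v2 : (σ.symm q).val ≠ (r.succ : Fin (k+1)).val := Fin.val_ne_of_ne hqne2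
                rw [hcval] at v1 ⊢
                rw [hsval] at v2 h2
                omega
              · rintro ⟨h1, h2⟩
                refine ⟨h1, ?_⟩
                rw [Fin.lt_def] at h2 ⊢
                rw [hcval] at h2
                rw [hsval]
                omega
            · by_cases hxb' : x = b
              · subst hxb'
                rw [hsb, Equiv.swap_apply_right]
                constructor
                · rintro ⟨h1, h2⟩
                  refine ⟨h1, ?_⟩
                  rw [Fin.lt_def] at h2 ⊢
                  rw [hcval] at h2
                  rw [hsval]
                  omega
                · rintro ⟨h1, h2⟩
                  refine ⟨h1, ?_⟩
                  rw [Fin.lt_def] at h2 ⊢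
                  have v1 : (σ.symm q).val ≠ c.val := Fin.val_ne_of_ne hqne1
                  have v2 : (σ.symm q).val ≠ (r.succ : Fin (k+1)).val := Fin.val_ne_of_ne hqne2
                  rw [hcval] at v1 ⊢
                  rw [hsval] at v2 h2
                  omega
              · have hne1 : σ.symm x ≠ c := fun h' => hxa' ((hxa x).mp h')
                have hne2 : σ.symm x ≠ r.succ := fun h' => hxb' ((hxb x).mp h')
                rw [Equiv.swap_apply_of_ne_of_ne hne1 hne2]
        unfold stmt19Inv at ihm ⊢
        rw [hset, hvq]
        exact ihm q
  have keym := key m le_rfl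
  -- part (1)
  have part1 : ∀ p q : Fin (k + 1), p < q → (π m).symm p < (π m).symm q →
      val m p < val m q := by
    intro p q hpq hslot
    have hsub : (Finset.univ.filter fun x => x < q ∧ (π m).symm q < (π m).symm x) ⊆
        (Finset.univ.filter fun x => x < p ∧ (π m).symm p < (π m).symm x) ∪ Finset.Ioo p q := by
      intro x hx
      simp only [Finset.mem_filter, Finset.mem_univ, true_and] at hx
      obtain ⟨hx1, hx2⟩ := hx
      rcases lt_trichotomy x p with h | h | h
      · simp only [Finset.mem_union, Finset.mem_filter, Finset.mem_univ, true_and]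
        exact Or.inl ⟨h, hslot.trans hx2⟩
      · exfalso
        subst h
        exact absurd (hslot.trans hx2) (lt_irrefl _)
      · simp only [Finset.mem_union, Finset.mem_Ioo]
        exact Or.inr ⟨h, hx1⟩
    have hcard := Finset.card_le_card hsub
    have hcard2 := Finset.card_union_le
      (Finset.univ.filter fun x => x < p ∧ (π m).symm p < (π m).symm x) (Finset.Ioo p q)
    rw [Fin.card_Ioo] at hcard2
    have hip := keym p
    have hiq := keym q
    have hM := M p q (le_of_lt hpq)
    have hval' : p.val < q.val := hpq
    unfold stmt19Inv at hip hiq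
    omega
  refine ⟨part1, ?_, ?_⟩
  · -- weakly decreasing → fully inverted
    intro hdec p q hpq
    by_contra hcon
    rw [not_lt] at hcon
    have hne : (π m).symm p ≠ (π m).symm q := fun h =>
      absurd ((π m).symm.injective h) (ne_of_lt hpq)
    have hslot : (π m).symm p < (π m).symm q := lt_of_le_of_ne hcon hne
    have hvlt := part1 p q hpq hslot
    -- antitone along slots
    have mono : ∀ d, ∀ i j : Fin (k+1), i.val + d = j.val → val m (π m j) ≤ val m (π m i) := by
      intro d
      induction d with
      | zero =>
        intro i j h
        have : i = j := Fin.ext (by omega)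
        rw [this]
      | succ n ih =>
        intro i j h
        have hj : 0 < j.val := by omega
        have hj1 : j.val - 1 < k := by omega
        have hstep' := hdec ⟨j.val - 1, hj1⟩
        have hcs' : (⟨j.val - 1, hj1⟩ : Fin k).succ = j := Fin.ext (by simp; omega)
        have hcc' : (⟨j.val - 1, hj1⟩ : Fin k).castSucc = ⟨j.val - 1, by omega⟩ :=
          Fin.ext (by simp)
        rw [hcs', hcc'] at hstep'
        have := ih i ⟨j.val - 1, by omega⟩ (by simp; omega)
        exact le_trans hstep' this
    have hd : ((π m).symm p).val + (((π m).symm q).val - ((π m).symm p).val)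
        = ((π m).symm q).val := by
      have := Fin.lt_def.mp hslot
      omega
    have := mono _ _ _ hd
    rw [Equiv.apply_symm_apply, Equiv.apply_symm_apply] at this
    omega
  · -- fully inverted → weakly decreasing
    intro hinv r
    set x := π m r.castSucc with hx
    set y := π m r.succ with hy
    have hcs : r.castSucc < r.succ := Fin.castSucc_lt_succ
    have hsx : (π m).symm x = r.castSucc := Equiv.symm_apply_apply _ _
    have hsy : (π m).symm y = r.succ := Equiv.symm_apply_apply _ _
    have hne : x ≠ y := fun h => absurd ((π m).injective h) (ne_of_lt hcs)
    rcases lt_trichotomy x y with h | h | h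
    · exfalso
      have := hinv x y h
      rw [hsx, hsy] at this
      exact absurd (hcs.trans this) (lt_irrefl _)
    · exact absurd h hne
    · -- y < x, show val y ≤ val x via subset argument
      have hsub : (Finset.univ.filter fun z => z < x ∧ (π m).symm x < (π m).symm z) ⊆
          (Finset.univ.filter fun z => z < y ∧ (π m).symm y < (π m).symm z)
          ∪ Finset.Ico y x := by
        intro z hz
        simp only [Finset.mem_filter, Finset.mem_univ, true_and, hsx] at hz
        obtain ⟨hz1, hz2⟩ := hz
        rcases lt_or_ge z y with hzy | hzy
        · have hne2 : (π m).symm z ≠ r.succ := by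
            rw [← hsy]
            exact fun h' => absurd ((π m).symm.injective h') (ne_of_lt hzy)
          have hne1 : (π m).symm z ≠ r.castSucc := ne_of_gt hz2
          have : r.succ < (π m).symm z := by
            rw [Fin.lt_def] at hz2 ⊢
            have v1 : ((π m).symm z).val ≠ r.val := Fin.val_ne_of_ne hne1
            have v2 : ((π m).symm z).val ≠ r.val + 1 := Fin.val_ne_of_ne hne2
            simp only [Fin.coe_castSucc] at hz2 v1
            simp only [Fin.val_succ]
            omega
          simp only [Finset.mem_union, Finset.mem_filter, Finset.mem_univ, true_and, hsy]
          exact Or.inl ⟨hzy, this⟩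
        · simp only [Finset.mem_union, Finset.mem_Ico]
          exact Or.inr ⟨hzy, hz1⟩
      have hcard := Finset.card_le_card hsub
      have hcard2 := Finset.card_union_le
        (Finset.univ.filter fun z => z < y ∧ (π m).symm y < (π m).symm z) (Finset.Ico y x)
      rw [Fin.card_Ico] at hcard2
      have hix := keym x
      have hiy := keym y
      have hM := M y x (le_of_lt h)
      have hval' : y.val < x.val := h
      unfold stmt19Inv at hix hiy
      omega
end
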